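/- arXiv:2501.12158 — 2 statements merged into one kernel-verified Lean document; each statement's English description precedes it below -/
import Mathlib

section
/- Assume F ⊆ Hom(S¹) and that the collection K_F of F-invariant minimal sets is finite. Let K₁, K₂ ∈ K_F, y₁ ∈ K₁ and x₂ ∈ K₂ be such that the open arc (y₁,x₂) is disjoint from every K ∈ K_F. Then for every f ∈ F and every K ∈ K_F \ {K₁,K₂}, one has f([y₁,x₂]) ∩ K = ∅. -/
open MeasureTheory Set Function Filter Topology
open scoped ENNReal NNReal

noncomputable section

/-- The circle, modeled as `ℝ/ℤ`, with its (arc-length) quotient metric. -/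
abbrev S1 : Type := AddCircle (1 : ℝ)

/-- The representative in `[0,1)` of a point of the circle. -/
def argS1 (x : S1) : ℝ := (AddCircle.equivIco 1 0 x : ℝ)

/-- The open arc traversed counterclockwise from `a` to `b`. -/
def openArc (a b : S1) : Set S1 := {x | 0 < argS1 (x - a) ∧ argS1 (x - a) < argS1 (b - a)}

/-- The closed arc traversed counterclockwise from `a` to `b`; note `[a,a] = {a}`. -/
def closedArc (a b : S1) : Set S1 := insert a (insert b (openArc a b))

/-- Homeomorphisms of the circle. -/
abbrev HomS1 : Type := S1 ≃ₜ S1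

/-- A circle homeomorphism is orientation preserving if it maps counterclockwise open
arcs onto counterclockwise open arcs. -/
def OrientationPreserving (f : HomS1) : Prop :=
  ∀ a b : S1, f '' openArc a b = openArc (f a) (f b)

/-- Membership in the semigroup generated by `F` (all finite compositions of members). -/
inductive InSemigroup (F : Set HomS1) : HomS1 → Prop
  | base : ∀ f ∈ F, InSemigroup F f
  | comp : ∀ f g : HomS1, InSemigroup F f → InSemigroup F g → InSemigroup F (g.trans f)

/-- The semigroup `G_F` generated by `F`, as a set of homeomorphisms. -/
def semigroupOf (F : Set HomS1) : Set HomS1 := {g | InSemigroup F g}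

/-- The orbit of `x` under the semigroup generated by `F`. -/
def orbitOf (F : Set HomS1) (x : S1) : Set S1 := {y | ∃ g ∈ semigroupOf F, g x = y}

/-- The semigroup generated by `F` has no finite orbit. -/
def NoFiniteOrbit (F : Set HomS1) : Prop := ∀ x : S1, (orbitOf F x).Infinite

/-- A set `K` is `F`-invariant if every `f ∈ F` maps it into itself. -/
def InvariantUnder (F : Set HomS1) (K : Set S1) : Prop := ∀ f ∈ F, f '' K ⊆ K

/-- A nonempty closed `F`-invariant set having no nonempty closed `F`-invariant
proper subset. -/
def IsMinimalInvariant (F : Set HomS1) (K : Set S1) : Prop :=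
  K.Nonempty ∧ IsClosed K ∧ InvariantUnder F K ∧
    ∀ K' ⊆ K, K'.Nonempty → IsClosed K' → InvariantUnder F K' → K' = K

/-- The collection `K_F` of `F`-invariant minimal sets. -/
def minimalSets (F : Set HomS1) : Set (Set S1) := {K | IsMinimalInvariant F K}

/-- The semigroup generated by `F` acts proximally on `I`. -/
def ProximalOn (F : Set HomS1) (I : Set S1) : Prop :=
  ∀ x ∈ I, ∀ y ∈ I, ∃ g : ℕ → HomS1, (∀ n, g n ∈ semigroupOf F) ∧
    Tendsto (fun n => dist (g n x) (g n y)) atTop (𝓝 0)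

/-- `L` is a finite union of closed arcs with endpoints in `K`. -/
def FiniteUnionOfArcsWithEndsIn (K L : Set S1) : Prop :=
  ∃ (n : ℕ) (a b : Fin n → S1), (∀ k, a k ∈ K) ∧ (∀ k, b k ∈ K) ∧
    L = ⋃ k, closedArc (a k) (b k)

/-- `L` is a finite union of closed arcs. -/
def FiniteUnionOfClosedArcs (L : Set S1) : Prop :=
  ∃ (n : ℕ) (a b : Fin n → S1), L = ⋃ k, closedArc (a k) (b k)

/-- The number of connected components of `L ⊆ S¹`. -/
def numComponents (L : Set S1) : ℕ :=
  {C : Set S1 | ∃ x ∈ L, C = connectedComponentIn L x}.ncard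

/-- `x` precedes `y` in the counterclockwise order of an arc starting at `a`. -/
def arcLE (a x y : S1) : Prop := argS1 (x - a) ≤ argS1 (y - a)

/-- `u` is monotone increasing on the closed arc `[a,b]` (counterclockwise order). -/
def MonotoneIncrOnArc (u : S1 → ℝ) (a b : S1) : Prop :=
  ∀ x ∈ closedArc a b, ∀ y ∈ closedArc a b, arcLE a x y → u x ≤ u y

/-- `u` is monotone decreasing on the closed arc `[a,b]` (counterclockwise order). -/
def MonotoneDecrOnArc (u : S1 → ℝ) (a b : S1) : Prop :=
  ∀ x ∈ closedArc a b, ∀ y ∈ closedArc a b, arcLE a x y → u y ≤ u x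

/-- A closed arc with endpoints in the minimal set `K` and disjoint from every other
minimal set of `F`. -/
def IsGapArc (F : Set HomS1) (K I : Set S1) : Prop :=
  (∃ x ∈ K, ∃ y ∈ K, I = closedArc x y) ∧
    ∀ K' ∈ minimalSets F, K' ≠ K → I ∩ K' = ∅

/-- The family `E_K`: the maximal closed arcs with endpoints in `K` whose union is
disjoint from every other minimal set. -/
def EK (F : Set HomS1) (K : Set S1) : Set (Set S1) :=
  {I | IsGapArc F K I ∧ ∀ J, IsGapArc F K J → I ⊆ J → J = I}


/-! ### Auxiliary machinery for Lemma 3.4 -/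

section S7Aux

lemma s7_argS1_coe (r : ℝ) : argS1 ((r : ℝ) : S1) = Int.fract r := by
  have := AddCircle.coe_equivIco_mk_apply (p := (1:ℝ)) r
  simp only [div_one, mul_one] at this
  exact this

lemma s7_coe_argS1 (x : S1) : ((argS1 x : ℝ) : S1) = x := by
  conv_rhs => rw [← (AddCircle.equivIco 1 0).symm_apply_apply x]
  rfl

lemma s7_argS1_mem (x : S1) : argS1 x ∈ Set.Ico (0:ℝ) 1 := by
  simpa [argS1] using (AddCircle.equivIco 1 0 x).2

lemma s7_argS1_eq_zero_iff {x : S1} : argS1 x = 0 ↔ x = 0 := by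
  constructor
  · intro h
    have := s7_coe_argS1 x
    rw [h] at this
    simpa using this.symm
  · rintro rfl
    have : ((0:ℝ) : S1) = (0 : S1) := by norm_cast
    rw [← this, s7_argS1_coe]
    simp

lemma s7_argS1_inj {x y : S1} (h : argS1 x = argS1 y) : x = y := by
  rw [← s7_coe_argS1 x, ← s7_coe_argS1 y, h]

lemma s7_coe_sub (r s : ℝ) : ((r - s : ℝ) : S1) = ((r:ℝ):S1) - ((s:ℝ):S1) := rfl

lemma s7_fract_of_neg {r : ℝ} (h0 : -1 ≤ r) (h1 : r < 0) : Int.fract r = r + 1 := by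
  rw [← Int.fract_add_intCast r 1]
  push_cast
  rw [Int.fract_eq_self]
  constructor <;> linarith

lemma s7_fract_eq_self_of_mem {t : ℝ} (h0 : 0 ≤ t) (h1 : t < 1) : Int.fract t = t :=
  Int.fract_eq_self.2 ⟨h0, h1⟩

lemma s7_arc_chart (a : S1) {v u : ℝ} (h0 : 0 ≤ v) (hvu : v < u) (h1 : u < 1) :
    openArc (a + ((v:ℝ):S1)) (a + ((u:ℝ):S1)) = {x | v < argS1 (x - a) ∧ argS1 (x - a) < u} := by
  ext x
  set t := argS1 (x - a) with ht
  have hxa : ((t:ℝ):S1) = x - a := s7_coe_argS1 (x - a)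
  have ht0 : 0 ≤ t := (s7_argS1_mem (x-a)).1
  have ht1 : t < 1 := (s7_argS1_mem (x-a)).2
  have e1 : x - (a + ((v:ℝ):S1)) = (((t - v : ℝ)):S1) := by
    rw [s7_coe_sub, hxa]; abel
  have e2 : (a + ((u:ℝ):S1)) - (a + ((v:ℝ):S1)) = (((u - v : ℝ)):S1) := by
    rw [s7_coe_sub]; abel
  simp only [openArc, Set.mem_setOf_eq, e1, e2, s7_argS1_coe]
  have e3 : Int.fract (u - v) = u - v := Int.fract_eq_self.2 ⟨by linarith, by linarith⟩
  rw [e3]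
  rcases le_or_gt v t with hvt | hvt
  · have e4 : Int.fract (t - v) = t - v := Int.fract_eq_self.2 ⟨by linarith, by linarith⟩
    rw [e4]
    constructor
    · rintro ⟨h, h'⟩; exact ⟨by linarith, by linarith⟩
    · rintro ⟨h, h'⟩; exact ⟨by linarith, by linarith⟩
  · have e4 : Int.fract (t - v) = t - v + 1 := s7_fract_of_neg (by linarith) (by linarith)
    rw [e4]
    constructor
    · rintro ⟨h, h'⟩; exact absurd h' (by linarith)
    · rintro ⟨h, h'⟩; exact absurd h (by linarith)

lemma s7_chart_image (a : S1) {v u : ℝ} (h0 : 0 ≤ v) (h1 : u ≤ 1) :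
    {x | v < argS1 (x - a) ∧ argS1 (x - a) < u} = (fun t : ℝ => a + ((t:ℝ):S1)) '' Set.Ioo v u := by
  ext x
  constructor
  · rintro ⟨h, h'⟩
    refine ⟨argS1 (x - a), ⟨h, h'⟩, ?_⟩
    show a + ((argS1 (x - a) : ℝ) : S1) = x
    rw [s7_coe_argS1]; abel
  · rintro ⟨t, ⟨htv, htu⟩, rfl⟩
    have h5 : (a + ((t:ℝ):S1)) - a = ((t:ℝ):S1) := by abel
    have e4 : Int.fract t = t := Int.fract_eq_self.2 ⟨by linarith, by linarith⟩
    show v < argS1 ((a + ((t:ℝ):S1)) - a) ∧ argS1 ((a + ((t:ℝ):S1)) - a) < u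
    rw [h5, s7_argS1_coe, e4]
    exact ⟨htv, htu⟩

lemma s7_left_not_mem (a b : S1) : a ∉ openArc a b := by
  intro h
  have : argS1 (a - a) = 0 := by rw [sub_self]; exact s7_argS1_eq_zero_iff.2 rfl
  exact absurd h.1 (by rw [this]; exact lt_irrefl 0)

lemma s7_arg_pos_of_ne {a b : S1} (hab : a ≠ b) : 0 < argS1 (b - a) := by
  rcases (s7_argS1_mem (b-a)).1.lt_or_eq with h | h
  · exact h
  · exact absurd (sub_eq_zero.1 (s7_argS1_eq_zero_iff.1 h.symm)) (by simpa using hab.symm)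

lemma s7_decomp (a x : S1) : x = a + ((argS1 (x - a) : ℝ) : S1) := by
  rw [s7_coe_argS1]; abel

lemma s7_chart_pt (a : S1) {t : ℝ} (h0 : 0 ≤ t) (h1 : t < 1) :
    argS1 ((a + ((t:ℝ):S1)) - a) = t := by
  have h5 : (a + ((t:ℝ):S1)) - a = ((t:ℝ):S1) := by abel
  rw [h5, s7_argS1_coe, s7_fract_eq_self_of_mem h0 h1]

lemma s7_arc_repr {c d : S1} (hcd : c ≠ d) (a : S1) (ha : a ∉ openArc c d) :
    ∃ α β : ℝ, 0 ≤ α ∧ α < β ∧ β ≤ 1 ∧ c = a + ((α:ℝ):S1) ∧ d = a + ((β:ℝ):S1) ∧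
      openArc c d = {x | α < argS1 (x - a) ∧ argS1 (x - a) < β} := by
  set α := argS1 (c - a) with hα
  set vd := argS1 (d - a) with hvd
  have hc : c = a + ((α:ℝ):S1) := s7_decomp a c
  have hd : d = a + ((vd:ℝ):S1) := s7_decomp a d
  have hα0 : 0 ≤ α := (s7_argS1_mem _).1
  have hα1 : α < 1 := (s7_argS1_mem _).2
  have hvd0 : 0 ≤ vd := (s7_argS1_mem _).1
  have hvd1 : vd < 1 := (s7_argS1_mem _).2
  rcases lt_trichotomy α vd with h | h | h
  · refine ⟨α, vd, hα0, h, hvd1.le, hc, hd, ?_⟩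
    rw [hc, hd]
    exact s7_arc_chart a hα0 h hvd1
  · exfalso
    apply hcd
    have h9 : ((α:ℝ):S1) = ((vd:ℝ):S1) := by rw [h]
    rw [hα, hvd, s7_coe_argS1, s7_coe_argS1] at h9
    exact sub_left_inj.mp h9
  · have hαpos : 0 < α := lt_of_le_of_lt hvd0 h
    have hdc : d - c = ((vd - α : ℝ) : S1) := by
      rw [s7_coe_sub]
      rw [hα, hvd, s7_coe_argS1, s7_coe_argS1]
      abel
    have hac : a - c = ((-α : ℝ) : S1) := by
      have h8 : ((-α:ℝ):S1) = -((α:ℝ):S1) := rfl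
      rw [h8, hα, s7_coe_argS1]
      abel
    have hargac : argS1 (a - c) = 1 - α := by
      rw [hac, s7_argS1_coe, s7_fract_of_neg (by linarith) (by linarith)]
      ring
    have hvd_eq : vd = 0 := by
      by_contra hne
      have hvdpos : 0 < vd := lt_of_le_of_ne hvd0 (Ne.symm hne)
      apply ha
      constructor
      · rw [hargac]; linarith
      · rw [hargac, hdc, s7_argS1_coe, s7_fract_of_neg (by linarith) (by linarith)]
        linarith
    have hda : d = a := by
      rw [hvd_eq] at hd
      simpa using hd
    refine ⟨α, 1, hα0, hα1, le_refl 1, hc, ?_, ?_⟩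
    · rw [hda, AddCircle.coe_period]
      abel
    · ext x
      set t := argS1 (x - a) with htdef
      have ht0 : 0 ≤ t := (s7_argS1_mem _).1
      have ht1 : t < 1 := (s7_argS1_mem _).2
      have hxc : x - c = ((t - α : ℝ) : S1) := by
        rw [s7_coe_sub, htdef, s7_coe_argS1, hα, s7_coe_argS1]
        abel
      have hdc2 : argS1 (d - c) = 1 - α := by rw [hda]; exact hargac
      show (0 < argS1 (x - c) ∧ argS1 (x - c) < argS1 (d - c)) ↔ (α < t ∧ t < 1)
      rw [hdc2, hxc, s7_argS1_coe]
      rcases le_or_gt α t with hat | hat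
      · rw [Int.fract_eq_self.2 ⟨by linarith, by linarith⟩]
        constructor
        · rintro ⟨p, q⟩; exact ⟨by linarith, ht1⟩
        · rintro ⟨p, q⟩; exact ⟨by linarith, by linarith⟩
      · rw [s7_fract_of_neg (by linarith) (by linarith)]
        constructor
        · rintro ⟨p, q⟩; exact absurd q (by linarith)
        · rintro ⟨p, q⟩; exact absurd p (by linarith)

/-- `T` is a gap arc of `ℳ`. -/
def s7Gap (ℳ : Set S1) (T : Set S1) : Prop :=
  T.Nonempty ∧ T ∩ ℳ = ∅ ∧ ∃ a b, a ∈ ℳ ∧ b ∈ ℳ ∧ T = openArc a b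

lemma s7_ne_of_arc_nonempty {a b : S1} (h : (openArc a b).Nonempty) : a ≠ b := by
  rintro rfl
  obtain ⟨x, hx1, hx2⟩ := h
  rw [sub_self, s7_argS1_eq_zero_iff.2 rfl] at hx2
  exact absurd (lt_trans hx1 hx2) (lt_irrefl 0)

lemma s7_gap_chart {ℳ T : Set S1} (h : s7Gap ℳ T) {z : S1} (hz : z ∈ ℳ) :
    ∃ α β : ℝ, 0 ≤ α ∧ α < β ∧ β ≤ 1 ∧
      T = {x | α < argS1 (x - z) ∧ argS1 (x - z) < β} ∧
      (∀ a b : S1, T = openArc a b → a = z + ((α:ℝ):S1) ∧ b = z + ((β:ℝ):S1)) := by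
  obtain ⟨hne, hdisj, a, b, ha, hb, rfl⟩ := h
  have hab : a ≠ b := s7_ne_of_arc_nonempty hne
  have hzT : z ∉ openArc a b := fun hzT => by
    rw [← mem_empty_iff_false z]
    rw [← hdisj]; exact ⟨hzT, hz⟩
  obtain ⟨α, β, h0, hαβ, h1, hca, hcb, hchart⟩ := s7_arc_repr hab z hzT
  refine ⟨α, β, h0, hαβ, h1, hchart, ?_⟩
  intro a' b' heq
  -- a' ≠ b', and openArc a b = openArc a' b' ; apply repr to (a',b') and compare.
  have hne' : (openArc a' b').Nonempty := heq ▸ hne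
  have hab' : a' ≠ b' := s7_ne_of_arc_nonempty hne'
  have hzT' : z ∉ openArc a' b' := heq ▸ hzT
  obtain ⟨α', β', h0', hαβ', h1', hca', hcb', hchart'⟩ := s7_arc_repr hab' z hzT'
  have hsets : {x : S1 | α < argS1 (x - z) ∧ argS1 (x - z) < β}
      = {x | α' < argS1 (x - z) ∧ argS1 (x - z) < β'} := by
    rw [← hchart, heq, hchart']
  -- derive α = α', β = β'
  have key : ∀ t : ℝ, 0 ≤ t → t < 1 → ((α < t ∧ t < β) ↔ (α' < t ∧ t < β')) := by
    intro t ht0 ht1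
    have := Set.ext_iff.1 hsets (z + ((t:ℝ):S1))
    rwa [mem_setOf_eq, mem_setOf_eq, s7_chart_pt z ht0 ht1] at this
  have hαα : α = α' := by
    by_contra hne2
    rcases lt_or_gt_of_ne hne2 with hlt | hgt
    · -- α < α' : pick t in (α, min α' β) ⊆ (α,β) \ (α',β')
      set t := (α + min α' β)/2 with htd
      have hm : α < min α' β := lt_min hlt hαβ
      have ht1 : t < 1 := by
        have h3 : t < min α' β := by rw [htd]; linarith
        have h2 : min α' β ≤ 1 := le_trans (min_le_right _ _) h1
        linarith
      have := (key t (le_trans h0 (by rw [htd]; linarith)) ht1).1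
        ⟨by rw [htd]; linarith, by
          have : t < min α' β := by rw [htd]; linarith
          exact lt_of_lt_of_le this (min_le_right _ _)⟩
      have ht2 : t < min α' β := by rw [htd]; linarith
      exact absurd this.1 (not_lt.2 (le_trans (le_of_lt ht2) (min_le_left _ _)))
    · -- α' < α
      set t := (α' + min α β')/2 with htd
      have hm : α' < min α β' := lt_min hgt hαβ'
      have ht1 : t < 1 := by
        have h3 : t < min α β' := by rw [htd]; linarith
        have h2 : min α β' ≤ 1 := le_trans (min_le_right _ _) h1'
        linarith
      have := (key t (le_trans h0' (by rw [htd]; linarith)) ht1).2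
        ⟨by rw [htd]; linarith, by
          have : t < min α β' := by rw [htd]; linarith
          exact lt_of_lt_of_le this (min_le_right _ _)⟩
      have ht2 : t < min α β' := by rw [htd]; linarith
      exact absurd this.1 (not_lt.2 (le_trans (le_of_lt ht2) (min_le_left _ _)))
  have hββ : β = β' := by
    subst hαα
    by_contra hne2
    rcases lt_or_gt_of_ne hne2 with hlt | hgt
    ·
      set t := (max α β + min β' 1)/2 with htd
      have hm1 : max α β < min β' 1 := by
        apply max_lt <;> exact lt_min (by linarith) (by linarith [hαβ, h1])
      have ht0 : 0 ≤ t := by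
        have h7 : 0 ≤ max α β := le_trans h0 (le_max_left _ _)
        rw [htd]; linarith [hm1]
      have ht1 : t < 1 := by
        have : min β' 1 ≤ 1 := min_le_right _ _
        have h3 : t < min β' 1 := by rw [htd]; linarith
        linarith
      have h4 : α < t := by
        have : max α β ≥ α := le_max_left _ _
        rw [htd]; linarith [hm1, le_max_left α β]
      have h5 : t < β' := by
        have h3 : t < min β' 1 := by rw [htd]; linarith
        exact lt_of_lt_of_le h3 (min_le_left _ _)
      have h6 : ¬ (t < β) := by
        have : max α β ≥ β := le_max_right _ _
        rw [htd]; push_neg; linarith [hm1, le_max_right α β]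
      exact absurd ((key t ht0 ht1).2 ⟨h4, h5⟩).2 h6
    · -- β' < β symmetric
      set t := (max α β' + min β 1)/2 with htd
      have hm1 : max α β' < min β 1 := by
        apply max_lt <;> exact lt_min (by linarith) (by linarith [hαβ', h1'])
      have ht0 : 0 ≤ t := by
        have : 0 ≤ max α β' := le_trans h0 (le_max_left _ _)
        rw [htd]; linarith [hm1]
      have ht1 : t < 1 := by
        have : min β 1 ≤ 1 := min_le_right _ _
        have h3 : t < min β 1 := by rw [htd]; linarith
        linarith
      have h4 : α < t := by
        rw [htd]; linarith [hm1, le_max_left α β']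
      have h5 : t < β := by
        have h3 : t < min β 1 := by rw [htd]; linarith
        exact lt_of_lt_of_le h3 (min_le_left _ _)
      have h6 : ¬ (t < β') := by
        rw [htd]; push_neg; linarith [hm1, le_max_right α β']
      exact absurd ((key t ht0 ht1).1 ⟨h4, h5⟩).2 h6
  subst hαα; subst hββ
  exact ⟨hca', hcb'⟩

lemma s7_gap_disjoint {ℳ T T' : Set S1} (h : s7Gap ℳ T) (h' : s7Gap ℳ T')
    {z : S1} (hz : z ∈ ℳ) : T = T' ∨ T ∩ T' = ∅ := by
  obtain ⟨α, β, h0, hαβ, h1, hc, hend⟩ := s7_gap_chart h hz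
  obtain ⟨α', β', h0', hαβ', h1', hc', hend'⟩ := s7_gap_chart h' hz
  by_cases hd : T ∩ T' = ∅
  · exact Or.inr hd
  · left
    obtain ⟨x, hxT, hxT'⟩ := nonempty_iff_ne_empty.2 hd
    rw [hc] at hxT; rw [hc'] at hxT'
    obtain ⟨ht1, ht2⟩ := hxT
    obtain ⟨ht1', ht2'⟩ := hxT'
    obtain ⟨hneT, hTM, a, b, haM, hbM, hTab⟩ := h
    obtain ⟨hneT', hTM', a', b', haM', hbM', hTab'⟩ := h'
    obtain ⟨haz, hbz⟩ := hend a b hTab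
    obtain ⟨haz', hbz'⟩ := hend' a' b' hTab'
    have hnotT : ∀ w ∈ ℳ, ¬ (α < argS1 (w - z) ∧ argS1 (w - z) < β) := by
      intro w hw hcon
      have : w ∈ T ∩ ℳ := ⟨by rw [hc]; exact hcon, hw⟩
      rw [hTM] at this; exact this
    have hnotT' : ∀ w ∈ ℳ, ¬ (α' < argS1 (w - z) ∧ argS1 (w - z) < β') := by
      intro w hw hcon
      have : w ∈ T' ∩ ℳ := ⟨by rw [hc']; exact hcon, hw⟩
      rw [hTM'] at this; exact this
    have hαα : α = α' := by
      by_contra hne2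
      rcases lt_or_gt_of_ne hne2 with hlt | hgt
      · -- α < α' < β : a' violates
        have hα'1 : α' < 1 := lt_of_lt_of_le hαβ' h1'
        have hph : argS1 (a' - z) = α' := by rw [haz']; exact s7_chart_pt z h0' hα'1
        exact hnotT a' haM' (by rw [hph]; exact ⟨hlt, by linarith⟩)
      · have hα1 : α < 1 := lt_of_lt_of_le hαβ h1
        have hph : argS1 (a - z) = α := by rw [haz]; exact s7_chart_pt z h0 hα1
        exact hnotT' a haM (by rw [hph]; exact ⟨hgt, by linarith⟩)
    have hββ : β = β' := by
      by_contra hne2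
      rcases lt_or_gt_of_ne hne2 with hlt | hgt
      · -- β < β' : b violates T'
        have hβ1 : β < 1 := lt_of_lt_of_le hlt h1'
        have hph : argS1 (b - z) = β := by rw [hbz]; exact s7_chart_pt z (by linarith) hβ1
        exact hnotT' b hbM (by rw [hph]; exact ⟨by rw [← hαα]; linarith, hlt⟩)
      · have hβ'1 : β' < 1 := lt_of_lt_of_le hgt h1
        have hph : argS1 (b' - z) = β' := by rw [hbz']; exact s7_chart_pt z (by linarith) hβ'1
        exact hnotT b' hbM' (by rw [hph]; exact ⟨by rw [hαα]; linarith, hgt⟩)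
    rw [hc, hc', hαα, hββ]

lemma s7_coe_cont : Continuous (fun t : ℝ => ((t : ℝ) : S1)) := continuous_quotient_mk'

lemma s7_ph_continuousAt (y x₀ : S1) (hx : x₀ ≠ y) :
    ContinuousAt (fun x => argS1 (x - y)) x₀ := by
  have h1 : ContinuousAt (fun x : S1 => x - y) x₀ := by fun_prop
  have h2 : ContinuousAt (AddCircle.equivIco 1 0) (x₀ - y) := by
    apply AddCircle.continuousAt_equivIco
    simpa [sub_eq_zero] using hx
  have h3 : ContinuousAt (fun x : S1 => AddCircle.equivIco 1 0 (x - y)) x₀ :=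
    ContinuousAt.comp (f := fun x : S1 => x - y) (x := x₀) h2 h1
  exact continuousAt_subtype_val.comp h3

lemma s7_coe_inj_Ico {t t' : ℝ} (h0 : 0 ≤ t) (h1 : t < 1) (h0' : 0 ≤ t') (h1' : t' < 1)
    (h : ((t:ℝ):S1) = ((t':ℝ):S1)) : t = t' := by
  have := congrArg argS1 h
  rwa [s7_argS1_coe, s7_argS1_coe, s7_fract_eq_self_of_mem h0 h1,
    s7_fract_eq_self_of_mem h0' h1'] at this

lemma s7_image_arc (f : S1 ≃ₜ S1) (a : S1) {v u : ℝ} (h0 : 0 ≤ v) (hvu : v < u) (h1 : u < 1) :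
    f '' {x | v < argS1 (x - a) ∧ argS1 (x - a) < u} =
      openArc (f (a + ((v:ℝ):S1))) (f (a + ((u:ℝ):S1))) ∨
    f '' {x | v < argS1 (x - a) ∧ argS1 (x - a) < u} =
      openArc (f (a + ((u:ℝ):S1))) (f (a + ((v:ℝ):S1))) := by
  set w := (u + 1) / 2 with hw
  have huw : u < w := by rw [hw]; linarith
  have hw1 : w < 1 := by rw [hw]; linarith
  set γ := fun t : ℝ => a + ((t:ℝ):S1) with hγ
  set Fm := fun t : ℝ => f (γ t) with hFm
  set y := Fm w with hy
  have hγinj : ∀ {t t' : ℝ}, 0 ≤ t → t < 1 → 0 ≤ t' → t' < 1 → γ t = γ t' → t = t' := by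
    intro t t' a1 a2 a3 a4 hh
    have : ((t:ℝ):S1) = ((t':ℝ):S1) := by
      have := hh
      simp only [hγ] at this
      exact add_left_cancel this
    exact s7_coe_inj_Ico a1 a2 a3 a4 this
  have hFm_ne : ∀ t ∈ Icc v u, Fm t ≠ y := by
    intro t ht hcontra
    have hγe : γ t = γ w := f.injective hcontra
    have : t = w := hγinj (le_trans h0 ht.1) (lt_trans (lt_of_le_of_lt ht.2 huw) hw1)
      (by rw [hw]; linarith) hw1 hγe
    exact absurd (this ▸ ht.2) (not_le.2 huw)
  set h := fun t : ℝ => argS1 (Fm t - y) with hh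
  have hFmcont : Continuous Fm := f.continuous.comp (by
    exact continuous_const.add s7_coe_cont)
  have hcont : ContinuousOn h (Icc v u) := by
    intro t ht
    exact ((s7_ph_continuousAt y (Fm t) (hFm_ne t ht)).comp hFmcont.continuousAt).continuousWithinAt
  have hInj : InjOn h (Icc v u) := by
    intro t ht t' ht' he
    have : Fm t - y = Fm t' - y := s7_argS1_inj he
    have : Fm t = Fm t' := by
      have := congrArg (· + y) this
      simpa using this
    exact hγinj (le_trans h0 ht.1) (lt_of_le_of_lt ht.2 h1) (le_trans h0 ht'.1)
      (lt_of_le_of_lt ht'.2 h1) (f.injective this)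
  haveI : Fact (v ≤ u) := ⟨hvu.le⟩
  have hmoa : StrictMono ((Icc v u).restrict h) ∨ StrictAnti ((Icc v u).restrict h) :=
    Continuous.strictMono_of_inj_boundedOrder' hcont.restrict hInj.injective
  have hv_mem : v ∈ Icc v u := ⟨le_refl v, hvu.le⟩
  have hu_mem : u ∈ Icc v u := ⟨hvu.le, le_refl u⟩
  have hchart : {x | v < argS1 (x - a) ∧ argS1 (x - a) < u} = γ '' Ioo v u :=
    s7_chart_image a h0 h1.le
  have hmem0 : ∀ t, 0 ≤ h t := fun t => (s7_argS1_mem _).1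
  have hmem1 : ∀ t, h t < 1 := fun t => (s7_argS1_mem _).2
  have hdec : ∀ t, Fm t = y + ((h t : ℝ) : S1) := fun t => s7_decomp y (Fm t)
  rcases hmoa with hmono | hanti
  · left
    replace hmono : StrictMonoOn h (Icc v u) := strictMono_restrict.mp hmono
    have himg : Fm '' Ioo v u = {x | h v < argS1 (x - y) ∧ argS1 (x - y) < h u} := by
      apply Subset.antisymm
      · rintro _ ⟨t, ht, rfl⟩
        exact ⟨hmono hv_mem ⟨ht.1.le, ht.2.le⟩ ht.1, hmono ⟨ht.1.le, ht.2.le⟩ hu_mem ht.2⟩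
      · rintro x ⟨hx1, hx2⟩
        obtain ⟨t, ht, hteq⟩ := intermediate_value_Ioo hvu.le hcont ⟨hx1, hx2⟩
        refine ⟨t, ht, ?_⟩
        have : Fm t - y = x - y := by
          have e1 := s7_coe_argS1 (Fm t - y)
          have e2 := s7_coe_argS1 (x - y)
          rw [show argS1 (Fm t - y) = argS1 (x - y) from hteq] at e1
          rw [e2] at e1
          exact e1.symm
        have := congrArg (· + y) this
        simpa using this
    have harc : {x | h v < argS1 (x - y) ∧ argS1 (x - y) < h u} =
        openArc (y + ((h v : ℝ):S1)) (y + ((h u : ℝ):S1)) :=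
      (s7_arc_chart y (hmem0 v) (hmono hv_mem hu_mem hvu) (hmem1 u)).symm
    calc f '' {x | v < argS1 (x - a) ∧ argS1 (x - a) < u} = Fm '' Ioo v u := by
          rw [hchart, image_image]
      _ = openArc (y + ((h v : ℝ):S1)) (y + ((h u : ℝ):S1)) := by rw [himg, harc]
      _ = openArc (f (a + ((v:ℝ):S1))) (f (a + ((u:ℝ):S1))) := by
          rw [← hdec v, ← hdec u]
  · right
    replace hanti : StrictAntiOn h (Icc v u) := strictAntiOn_iff_strictAnti.mpr hanti
    have himg : Fm '' Ioo v u = {x | h u < argS1 (x - y) ∧ argS1 (x - y) < h v} := by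
      apply Subset.antisymm
      · rintro _ ⟨t, ht, rfl⟩
        exact ⟨hanti ⟨ht.1.le, ht.2.le⟩ hu_mem ht.2, hanti hv_mem ⟨ht.1.le, ht.2.le⟩ ht.1⟩
      · rintro x ⟨hx1, hx2⟩
        obtain ⟨t, ht, hteq⟩ := intermediate_value_Ioo' hvu.le hcont ⟨hx1, hx2⟩
        refine ⟨t, ht, ?_⟩
        have : Fm t - y = x - y := by
          have e1 := s7_coe_argS1 (Fm t - y)
          have e2 := s7_coe_argS1 (x - y)
          rw [show argS1 (Fm t - y) = argS1 (x - y) from hteq] at e1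
          rw [e2] at e1
          exact e1.symm
        have := congrArg (· + y) this
        simpa using this
    have harc : {x | h u < argS1 (x - y) ∧ argS1 (x - y) < h v} =
        openArc (y + ((h u : ℝ):S1)) (y + ((h v : ℝ):S1)) :=
      (s7_arc_chart y (hmem0 u) (hanti hv_mem hu_mem hvu) (hmem1 v)).symm
    calc f '' {x | v < argS1 (x - a) ∧ argS1 (x - a) < u} = Fm '' Ioo v u := by
          rw [hchart, image_image]
      _ = openArc (y + ((h u : ℝ):S1)) (y + ((h v : ℝ):S1)) := by rw [himg, harc]
      _ = openArc (f (a + ((u:ℝ):S1))) (f (a + ((v:ℝ):S1))) := by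
          rw [← hdec v, ← hdec u]

lemma s7_dist_le (z : S1) {α β : ℝ} (h0 : 0 ≤ α) (hab : α ≤ β) (h1 : β ≤ 1) :
    dist (z + ((α:ℝ):S1)) (z + ((β:ℝ):S1)) ≤ β - α := by
  have he : (z + ((α:ℝ):S1)) - (z + ((β:ℝ):S1)) = (((α - β : ℝ)):S1) := by
    rw [s7_coe_sub]; abel
  rw [dist_eq_norm, he]
  have hnorm : ‖(((α - β : ℝ)):S1)‖ = |(α - β) - round (α - β)| := by
    rw [AddCircle.norm_eq]; norm_num
  rw [hnorm, abs_sub_round_eq_min]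
  rcases eq_or_lt_of_le hab with rfl | hlt
  · simp [Int.fract_eq_self.2 (by constructor <;> norm_num : (0:ℝ) ≤ 0 ∧ (0:ℝ) < 1)]
  · rcases eq_or_lt_of_le (show β - α ≤ 1 by linarith) with heq | hlt1
    · have : α - β = -1 := by linarith
      rw [this]
      have : Int.fract (-1 : ℝ) = 0 := by
        rw [show (-1 : ℝ) = ((-1 : ℤ) : ℝ) by norm_num, Int.fract_intCast]
      rw [this]
      simp; linarith
    · have : Int.fract (α - β) = α - β + 1 := s7_fract_of_neg (by linarith) (by linarith)
      rw [this]
      have : 1 - (α - β + 1) = β - α := by ring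
      rw [this]
      exact min_le_right _ _

def s7Typed (ℳ Ma Mb : Set S1) : Set (Set S1) :=
  {T | s7Gap ℳ T ∧ ∃ a b, a ∈ Ma ∧ b ∈ Mb ∧ T = openArc a b}

lemma s7_typed_finite {ℳ Ma Mb : Set S1} (hMa : IsClosed Ma) (hMb : IsClosed Mb)
    (hd : Ma ∩ Mb = ∅) {z : S1} (hz : z ∈ ℳ) : (s7Typed ℳ Ma Mb).Finite := by
  obtain ⟨δ, hδ, hthick⟩ := (Set.disjoint_iff_inter_eq_empty.2 hd).exists_thickenings
    hMa.isCompact hMb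
  have hsep : ∀ p ∈ Ma, ∀ q ∈ Mb, δ ≤ dist p q := by
    intro p hp q hq
    by_contra hcon
    push_neg at hcon
    have h1 : p ∈ Metric.thickening δ Ma := Metric.self_subset_thickening hδ Ma hp
    have h2 : p ∈ Metric.thickening δ Mb :=
      Metric.mem_thickening_iff.2 ⟨q, hq, hcon⟩
    exact Set.disjoint_left.1 hthick h1 h2
  -- the data associated to each typed gap arc
  set Q : Set S1 → ℝ → Prop := fun T α =>
    ∃ β : ℝ, 0 ≤ α ∧ α < β ∧ β ≤ 1 ∧ δ ≤ β - α ∧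
      T = {x | α < argS1 (x - z) ∧ argS1 (x - z) < β} with hQ
  have hexists : ∀ T ∈ s7Typed ℳ Ma Mb, ∃ α, Q T α := by
    rintro T ⟨hgap, a, b, haMa, hbMb, hTab⟩
    obtain ⟨α, β, h0, hαβ, h1, hchart, hends⟩ := s7_gap_chart hgap hz
    obtain ⟨haz, hbz⟩ := hends a b hTab
    refine ⟨α, β, h0, hαβ, h1, ?_, hchart⟩
    have hd1 : δ ≤ dist a b := hsep a haMa b hbMb
    have hd2 : dist a b ≤ β - α := by
      rw [haz, hbz]; exact s7_dist_le z h0 hαβ.le h1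
    linarith
  -- separation of the α's
  have hsepα : ∀ T ∈ s7Typed ℳ Ma Mb, ∀ T' ∈ s7Typed ℳ Ma Mb, ∀ α α',
      Q T α → Q T' α' → |α - α'| < δ → T = T' := by
    rintro T hT T' hT' α α' ⟨β, h0, hαβ, h1, hδβ, hc⟩ ⟨β', h0', hαβ', h1', hδβ', hc'⟩ habs
    rcases s7_gap_disjoint hT.1 hT'.1 hz with he | hdis
    · exact he
    · exfalso
      -- produce a common point
      rcases le_total α α' with hle | hle
      · have hα'β : α' < β := by
          have : α' - α < δ := by rw [abs_sub_comm] at habs; exact lt_of_le_of_lt (le_abs_self _) habs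
          linarith
        set t := (α' + min β β')/2 with htd
        have hm : α' < min β β' := lt_min hα'β hαβ'
        have htlt : t < min β β' := by rw [htd]; linarith
        have ht0 : 0 ≤ t := by rw [htd]; linarith
        have ht1 : t < 1 := lt_of_lt_of_le htlt (le_trans (min_le_right _ _) h1')
        have hmem : (z + ((t:ℝ):S1)) ∈ T ∩ T' := by
          constructor
          · rw [hc]
            refine ⟨?_, ?_⟩ <;> rw [s7_chart_pt z ht0 ht1]
            · linarith
            · exact lt_of_lt_of_le htlt (min_le_left _ _)
          · rw [hc']
            refine ⟨?_, ?_⟩ <;> rw [s7_chart_pt z ht0 ht1]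
            · rw [htd]; linarith
            · exact lt_of_lt_of_le htlt (min_le_right _ _)
        rw [hdis] at hmem; exact hmem
      · have hαβ'2 : α < β' := by
          have : α - α' < δ := lt_of_le_of_lt (le_abs_self _) habs
          linarith
        set t := (α + min β β')/2 with htd
        have hm : α < min β β' := lt_min hαβ hαβ'2
        have htlt : t < min β β' := by rw [htd]; linarith
        have ht0 : 0 ≤ t := by rw [htd]; linarith
        have ht1 : t < 1 := lt_of_lt_of_le htlt (le_trans (min_le_right _ _) h1')
        have hmem : (z + ((t:ℝ):S1)) ∈ T ∩ T' := by
          constructor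
          · rw [hc]
            refine ⟨?_, ?_⟩ <;> rw [s7_chart_pt z ht0 ht1]
            · rw [htd]; linarith
            · exact lt_of_lt_of_le htlt (min_le_left _ _)
          · rw [hc']
            refine ⟨?_, ?_⟩ <;> rw [s7_chart_pt z ht0 ht1]
            · linarith
            · exact lt_of_lt_of_le htlt (min_le_right _ _)
        rw [hdis] at hmem; exact hmem
  -- injection into a finite set of integers
  classical
  set g : Set S1 → ℤ := fun T => if h : ∃ α, Q T α then ⌊Classical.choose h / δ⌋ else 0 with hg
  apply Set.Finite.of_finite_image (f := g)
  · apply Set.Finite.subset (Set.finite_Icc (0:ℤ) ⌈1/δ⌉)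
    rintro n ⟨T, hT, rfl⟩
    have hex := hexists T hT
    rw [hg]
    simp only [dif_pos hex]
    obtain ⟨β, h0, hαβ, h1, hδβ, hc⟩ := Classical.choose_spec hex
    set α := Classical.choose hex
    constructor
    · exact Int.floor_nonneg.2 (div_nonneg h0 hδ.le)
    · have hα1 : α ≤ 1 := by linarith
      calc ⌊α / δ⌋ ≤ ⌊1 / δ⌋ := Int.floor_le_floor (by
            exact div_le_div_of_nonneg_right hα1 hδ.le)
        _ ≤ ⌈1/δ⌉ := Int.floor_le_ceil _
  · intro T hT T' hT' heq
    have hex := hexists T hT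
    have hex' := hexists T' hT'
    rw [hg] at heq
    simp only [dif_pos hex, dif_pos hex'] at heq
    set α := Classical.choose hex with hα
    set α' := Classical.choose hex' with hα'
    have hQT := Classical.choose_spec hex
    have hQT' := Classical.choose_spec hex'
    apply hsepα T hT T' hT' α α' hQT hQT'
    -- same floor of /δ implies within δ
    have f1 : (⌊α / δ⌋ : ℝ) ≤ α / δ := Int.floor_le _
    have f2 : α / δ < ⌊α / δ⌋ + 1 := Int.lt_floor_add_one _
    have f3 : (⌊α' / δ⌋ : ℝ) ≤ α' / δ := Int.floor_le _
    have f4 : α' / δ < ⌊α' / δ⌋ + 1 := Int.lt_floor_add_one _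
    rw [heq] at f1 f2
    rw [abs_sub_lt_iff]
    have e1 : α - α' = (α/δ - α'/δ) * δ := by field_simp
    have e2 : α' - α = (α'/δ - α/δ) * δ := by field_simp
    constructor
    · rw [e1]
      calc (α/δ - α'/δ) * δ < 1 * δ := by
            apply mul_lt_mul_of_pos_right _ hδ
            linarith
        _ = δ := one_mul δ
    · rw [e2]
      calc (α'/δ - α/δ) * δ < 1 * δ := by
            apply mul_lt_mul_of_pos_right _ hδ
            linarith
        _ = δ := one_mul δ

def s7Mixed (MS : Set (Set S1)) (T : Set S1) : Prop :=
  s7Gap (⋃₀ MS) T ∧ ∃ a b : S1, ∃ Ma Mb : Set S1,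
    Ma ∈ MS ∧ Mb ∈ MS ∧ Ma ≠ Mb ∧ a ∈ Ma ∧ b ∈ Mb ∧ T = openArc a b

lemma s7_walk_core {ψ : ℝ → S1} (hψ : Continuous ψ) {A B : Set S1}
    (hA : IsClosed A) (hB : IsClosed B)
    {p q : ℝ} (hpq : p < q) (hp : ψ p ∈ A) (hq : ψ q ∈ B)
    (hdAB : ∀ y, y ∈ A → y ∈ B → False) :
    ∃ v u, p ≤ v ∧ v < u ∧ u ≤ q ∧ ψ v ∈ A ∧ ψ u ∈ B ∧
      ∀ t ∈ Ioo v u, ψ t ∉ A ∪ B := by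
  set S := ψ ⁻¹' B ∩ Icc p q with hS
  have hS_closed : IsClosed S := (hB.preimage hψ).inter isClosed_Icc
  have hS_cpt : IsCompact S := isCompact_Icc.of_isClosed_subset hS_closed inter_subset_right
  have hS_ne : S.Nonempty := ⟨q, hq, ⟨hpq.le, le_refl q⟩⟩
  set u := sInf S with hu
  have hu_mem : u ∈ S := hS_cpt.sInf_mem hS_ne
  have hup : p ≤ u := hu_mem.2.1
  have huq : u ≤ q := hu_mem.2.2
  have hpu : p < u := by
    rcases hup.lt_or_eq with h | h
    · exact h
    · exact absurd hu_mem.1 (fun hc => hdAB (ψ p) hp (by rw [h]; exact hc))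
  set S2 := ψ ⁻¹' A ∩ Icc p u with hS2
  have hS2_closed : IsClosed S2 := (hA.preimage hψ).inter isClosed_Icc
  have hS2_cpt : IsCompact S2 := isCompact_Icc.of_isClosed_subset hS2_closed inter_subset_right
  have hS2_ne : S2.Nonempty := ⟨p, hp, ⟨le_refl p, hpu.le⟩⟩
  set v := sSup S2 with hv
  have hv_mem : v ∈ S2 := hS2_cpt.sSup_mem hS2_ne
  have hvu : v < u := by
    rcases hv_mem.2.2.lt_or_eq with h | h
    · exact h
    · exact absurd hv_mem.1 (fun hc => hdAB (ψ u) (by rw [← h]; exact hc) hu_mem.1)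
  refine ⟨v, u, hv_mem.2.1, hvu, huq, hv_mem.1, hu_mem.1, ?_⟩
  rintro t ⟨htv, htu⟩ (hc | hc)
  · have : t ∈ S2 := ⟨hc, ⟨le_trans hv_mem.2.1 htv.le, htu.le⟩⟩
    exact absurd (le_csSup hS2_cpt.bddAbove this) (not_le.2 htv)
  · have : t ∈ S := ⟨hc, ⟨le_trans hv_mem.2.1 htv.le, le_trans htu.le huq⟩⟩
    exact absurd (csInf_le hS_cpt.bddBelow this) (not_le.2 htu)

lemma s7_walk_produce {MS : Set (Set S1)} {A B : Set S1}
    (hA : IsClosed A) (hB : IsClosed B)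
    (hAty : ∀ y ∈ A, ∃ M ∈ MS, y ∈ M) (hBty : ∀ y ∈ B, ∃ M ∈ MS, y ∈ M)
    (hsep : ∀ M ∈ MS, (M ∩ A).Nonempty → (M ∩ B).Nonempty → False)
    (hcover : ⋃₀ MS ⊆ A ∪ B)
    (f : S1 ≃ₜ S1) (a : S1) {p q : ℝ} (h0p : 0 ≤ p) (hpq : p < q) (hq1 : q < 1)
    (hp : f (a + ((p:ℝ):S1)) ∈ A) (hq : f (a + ((q:ℝ):S1)) ∈ B) :
    ∃ (T : Set S1) (v u : ℝ), s7Mixed MS T ∧ p ≤ v ∧ v < u ∧ u ≤ q ∧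
      T = f '' {x | v < argS1 (x - a) ∧ argS1 (x - a) < u} := by
  set ψ : ℝ → S1 := fun t => f (a + ((t:ℝ):S1)) with hψdef
  have hψ : Continuous ψ := f.continuous.comp (continuous_const.add s7_coe_cont)
  have hdAB : ∀ y, y ∈ A → y ∈ B → False := by
    intro y hyA hyB
    obtain ⟨M, hM, hyM⟩ := hAty y hyA
    exact hsep M hM ⟨y, hyM, hyA⟩ ⟨y, hyM, hyB⟩
  obtain ⟨v, u, hpv, hvu, huq, hvA, huB, hmid⟩ := s7_walk_core hψ hA hB hpq hp hq hdAB
  have h0v : 0 ≤ v := le_trans h0p hpv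
  have hu1 : u < 1 := lt_of_le_of_lt huq hq1
  set T := f '' {x | v < argS1 (x - a) ∧ argS1 (x - a) < u} with hT
  have hTimg : T = ψ '' Ioo v u := by
    rw [hT, s7_chart_image a h0v hu1.le, image_image]
  obtain ⟨M₁, hM₁, hvM₁⟩ := hAty (ψ v) hvA
  obtain ⟨M₂, hM₂, huM₂⟩ := hBty (ψ u) huB
  have hM₁₂ : M₁ ≠ M₂ := by
    rintro rfl
    exact hsep M₁ hM₁ ⟨ψ v, hvM₁, hvA⟩ ⟨ψ u, huM₂, huB⟩
  have hTdisj : T ∩ ⋃₀ MS = ∅ := by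
    rw [hTimg]
    apply eq_empty_of_forall_notMem
    rintro y ⟨⟨t, ht, rfl⟩, hyM⟩
    exact hmid t ht (hcover hyM)
  have hTne : T.Nonempty := by
    rw [hTimg]
    exact ⟨ψ ((v+u)/2), ⟨(v+u)/2, ⟨by linarith, by linarith⟩, rfl⟩⟩
  have hvℳ : ψ v ∈ ⋃₀ MS := ⟨M₁, hM₁, hvM₁⟩
  have huℳ : ψ u ∈ ⋃₀ MS := ⟨M₂, hM₂, huM₂⟩
  rcases s7_image_arc f a h0v hvu hu1 with harc | harc
  · refine ⟨T, v, u, ⟨⟨hTne, hTdisj, ψ v, ψ u, hvℳ, huℳ, by rw [hT, harc]⟩,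
      ψ v, ψ u, M₁, M₂, hM₁, hM₂, hM₁₂, hvM₁, huM₂, by rw [hT, harc]⟩, hpv, hvu, huq, rfl⟩
  · refine ⟨T, v, u, ⟨⟨hTne, hTdisj, ψ u, ψ v, huℳ, hvℳ, by rw [hT, harc]⟩,
      ψ u, ψ v, M₂, M₁, hM₂, hM₁, hM₁₂.symm, huM₂, hvM₁, by rw [hT, harc]⟩, hpv, hvu, huq, rfl⟩


lemma s7_coe_zero : (((0:ℝ)) : S1) = 0 := by norm_cast

lemma s7_mixed_finite {MS : Set (Set S1)} (hfin : MS.Finite) (hclosed : ∀ M ∈ MS, IsClosed M)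
    (hdisj : ∀ M ∈ MS, ∀ N ∈ MS, M ≠ N → M ∩ N = ∅) {z : S1} (hz : z ∈ ⋃₀ MS) :
    {T | s7Mixed MS T}.Finite := by
  classical
  have hsub : {T | s7Mixed MS T} ⊆
      ⋃ p ∈ MS ×ˢ MS, (if p.1 = p.2 then (∅ : Set (Set S1)) else s7Typed (⋃₀ MS) p.1 p.2) := by
    rintro T ⟨hg, a, b, Ma, Mb, hMa, hMb, hne, haMa, hbMb, hTab⟩
    refine Set.mem_biUnion (show (Ma, Mb) ∈ MS ×ˢ MS from ⟨hMa, hMb⟩) ?_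
    rw [if_neg hne]
    exact ⟨hg, a, b, haMa, hbMb, hTab⟩
  refine Set.Finite.subset ?_ hsub
  refine Set.Finite.biUnion (hfin.prod hfin) ?_
  intro p hp
  split_ifs with h
  · exact Set.finite_empty
  · exact s7_typed_finite (hclosed p.1 hp.1) (hclosed p.2 hp.2) (hdisj p.1 hp.1 p.2 hp.2 h) hz

end S7Aux

/-- **Lemma 3.4.** Suppose the collection of `F`-invariant minimal sets is finite. Let
`K₁, K₂` be minimal sets, `y₁ ∈ K₁`, `x₂ ∈ K₂`, with the open arc `(y₁, x₂)` disjoint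
from every minimal set. Then for every `f ∈ F` and every minimal set
`K ∉ {K₁, K₂}`, one has `f([y₁, x₂]) ∩ K = ∅`. -/
theorem statement7 (F : Set HomS1) (hfin : (minimalSets F).Finite)
    (K₁ K₂ : Set S1) (hK₁ : K₁ ∈ minimalSets F) (hK₂ : K₂ ∈ minimalSets F)
    (y₁ x₂ : S1) (hy₁ : y₁ ∈ K₁) (hx₂ : x₂ ∈ K₂)
    (hgap : ∀ K ∈ minimalSets F, openArc y₁ x₂ ∩ K = ∅) :
    ∀ f ∈ F, ∀ K ∈ minimalSets F, K ≠ K₁ → K ≠ K₂ →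
      f '' closedArc y₁ x₂ ∩ K = ∅ := by
  intro f hf K hK hKK₁ hKK₂
  by_contra hcon
  rw [← Ne, ← Set.nonempty_iff_ne_empty] at hcon
  obtain ⟨w, hwf, hwK⟩ := hcon
  obtain ⟨x, hxarc, rfl⟩ := hwf
  classical
  set MS := minimalSets F with hMSdef
  have hclosed : ∀ M ∈ MS, IsClosed M := fun M hM => hM.2.1
  have hinv : ∀ M ∈ MS, f '' M ⊆ M := fun M hM => hM.2.2.1 f hf
  have hdisjMS : ∀ M ∈ MS, ∀ N ∈ MS, M ≠ N → M ∩ N = ∅ := by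
    intro M hM N hN hMN
    by_contra hc
    rw [← Ne, ← Set.nonempty_iff_ne_empty] at hc
    have hMNinv : InvariantUnder F (M ∩ N) := by
      intro g hg
      refine Set.subset_inter ?_ ?_
      · exact (Set.image_mono Set.inter_subset_left).trans (hM.2.2.1 g hg)
      · exact (Set.image_mono Set.inter_subset_right).trans (hN.2.2.1 g hg)
    have h1 : M ∩ N = M := hM.2.2.2 (M ∩ N) Set.inter_subset_left hc
      ((hM.2.1).inter (hN.2.1)) hMNinv
    have h2 : M ∩ N = N := hN.2.2.2 (M ∩ N) Set.inter_subset_right hc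
      ((hM.2.1).inter (hN.2.1)) hMNinv
    exact hMN (h1.symm.trans h2)
  have hMy₁ : y₁ ∈ ⋃₀ MS := ⟨K₁, hK₁, hy₁⟩
  have hMx₂ : x₂ ∈ ⋃₀ MS := ⟨K₂, hK₂, hx₂⟩
  have hfy₁ : f y₁ ∈ K₁ := hinv K₁ hK₁ ⟨y₁, hy₁, rfl⟩
  have hfx₂ : f x₂ ∈ K₂ := hinv K₂ hK₂ ⟨x₂, hx₂, rfl⟩
  have hxO : x ∈ openArc y₁ x₂ := by
    simp only [closedArc, Set.mem_insert_iff] at hxarc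
    rcases hxarc with rfl | rfl | h
    · exfalso
      have hmem : f x ∈ K ∩ K₁ := ⟨hwK, hfy₁⟩
      rw [hdisjMS K hK K₁ hK₁ hKK₁] at hmem
      exact hmem
    · exfalso
      have hmem : f x ∈ K ∩ K₂ := ⟨hwK, hfx₂⟩
      rw [hdisjMS K hK K₂ hK₂ hKK₂] at hmem
      exact hmem
    · exact h
  have hyx : y₁ ≠ x₂ := s7_ne_of_arc_nonempty ⟨x, hxO⟩
  set s := argS1 (x₂ - y₁) with hsdef
  have hs0 : 0 < s := s7_arg_pos_of_ne hyx
  have hs1 : s < 1 := (s7_argS1_mem _).2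
  have harcM : openArc y₁ x₂ ∩ ⋃₀ MS = ∅ := by
    apply Set.eq_empty_of_forall_notMem
    rintro y ⟨hyO, M, hM, hyM⟩
    have h0 := hgap M hM
    have hmem : y ∈ openArc y₁ x₂ ∩ M := ⟨hyO, hyM⟩
    rw [h0] at hmem
    exact hmem
  have hIgap : s7Gap (⋃₀ MS) (openArc y₁ x₂) := ⟨⟨x, hxO⟩, harcM, y₁, x₂, hMy₁, hMx₂, rfl⟩
  have hfinG : {T | s7Mixed MS T}.Finite := s7_mixed_finite hfin hclosed hdisjMS hMy₁
  -- the "pick" function: each mixed gap arc W contains a mixed gap arc inside f '' W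
  have hpick_ex : ∀ T ∈ {T | s7Mixed MS T}, ∃ T', T' ∈ {T | s7Mixed MS T} ∧ T' ⊆ f '' T := by
    rintro T ⟨hgapT, a, b, Ma, Mb, hMa, hMb, hMab, haMa, hbMb, hTab⟩
    have hab : a ≠ b := by
      rintro rfl
      have hmem : a ∈ Ma ∩ Mb := ⟨haMa, hbMb⟩
      rw [hdisjMS Ma hMa Mb hMb hMab] at hmem
      exact hmem
    set sW := argS1 (b - a) with hsW
    have hsW0 : 0 < sW := s7_arg_pos_of_ne hab
    have hsW1 : sW < 1 := (s7_argS1_mem _).2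
    have hBcl : IsClosed (⋃₀ (MS \ {Ma})) := by
      rw [Set.sUnion_eq_biUnion]
      exact Set.Finite.isClosed_biUnion (hfin.subset Set.diff_subset)
        (fun M hM => hclosed M (Set.diff_subset hM))
    have hp0 : f (a + (((0:ℝ)):S1)) ∈ Ma := by
      rw [s7_coe_zero, add_zero]
      exact hinv Ma hMa ⟨a, haMa, rfl⟩
    have hq0 : f (a + ((sW:ℝ):S1)) ∈ ⋃₀ (MS \ {Ma}) := by
      have hb' : a + ((sW:ℝ):S1) = b := (s7_decomp a b).symm
      rw [hb']
      exact ⟨Mb, ⟨hMb, fun hc => hMab (Set.mem_singleton_iff.1 hc).symm⟩,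
        hinv Mb hMb ⟨b, hbMb, rfl⟩⟩
    obtain ⟨T', v, u, hT'm, h0v, hvu, hus, hT'eq⟩ :=
      s7_walk_produce (hclosed Ma hMa) hBcl
        (fun y hy => ⟨Ma, hMa, hy⟩)
        (fun y hy => by obtain ⟨M, hM, hyM⟩ := hy; exact ⟨M, hM.1, hyM⟩)
        (by
          rintro M hM ⟨y, hyM, hyA⟩ ⟨y', hy'M, M', hM', hy'M'⟩
          have hMMa : M = Ma := by
            by_contra hne
            have hmem : y ∈ M ∩ Ma := ⟨hyM, hyA⟩
            rw [hdisjMS M hM Ma hMa hne] at hmem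
            exact hmem
          have hMM' : M = M' := by
            by_contra hne
            have hmem : y' ∈ M ∩ M' := ⟨hy'M, hy'M'⟩
            rw [hdisjMS M hM M' hM'.1 hne] at hmem
            exact hmem
          exact hM'.2 (Set.mem_singleton_iff.2 (hMM'.symm.trans hMMa)))
        (by
          rintro y ⟨M, hM, hyM⟩
          by_cases hMa' : M = Ma
          · exact Or.inl (hMa' ▸ hyM)
          · exact Or.inr ⟨M, ⟨hM, fun hc => hMa' (Set.mem_singleton_iff.1 hc)⟩, hyM⟩)
        f a (le_refl (0:ℝ)) hsW0 hsW1 hp0 hq0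
    refine ⟨T', hT'm, ?_⟩
    rw [hT'eq, hTab]
    apply Set.image_mono
    rintro y ⟨h1, h2⟩
    exact ⟨lt_of_le_of_lt h0v h1, lt_of_lt_of_le h2 hus⟩
  have hpick_ex' : ∀ T : Set S1, ∃ T', T ∈ {T | s7Mixed MS T} →
      (T' ∈ {T | s7Mixed MS T} ∧ T' ⊆ f '' T) := by
    intro T
    by_cases h : T ∈ {T | s7Mixed MS T}
    · obtain ⟨T', h1, h2⟩ := hpick_ex T h
      exact ⟨T', fun _ => ⟨h1, h2⟩⟩
    · exact ⟨∅, fun hc => absurd hc h⟩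
  choose pick hpick using hpick_ex'
  have hmapsTo : Set.MapsTo pick {T | s7Mixed MS T} {T | s7Mixed MS T} :=
    fun T hT => (hpick T hT).1
  have hinj : Set.InjOn pick {T | s7Mixed MS T} := by
    intro T hT T' hT' heq
    by_contra hne
    rcases s7_gap_disjoint hT.1 hT'.1 hMy₁ with he | hdis
    · exact hne he
    · obtain ⟨y, hy⟩ := (hpick T hT).1.1.1
      have hy1 : y ∈ f '' T := (hpick T hT).2 hy
      have hy2 : y ∈ f '' T' := (hpick T' hT').2 (heq ▸ hy)
      have hmem : y ∈ f '' (T ∩ T') := by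
        rw [Set.image_inter f.injective]
        exact ⟨hy1, hy2⟩
      rw [hdis] at hmem
      simp at hmem
  have hbij := (hfinG.injOn_iff_bijOn_of_mapsTo hmapsTo).mp hinj
  have hsurj : Set.SurjOn pick {T | s7Mixed MS T} {T | s7Mixed MS T} := hbij.surjOn
  -- walks across the arc I = (y₁, x₂) containing the violation point x
  set tx := argS1 (x - y₁) with htxdef
  have htx0 : 0 < tx := hxO.1
  have htxs : tx < s := hxO.2
  have hγx : y₁ + ((tx:ℝ):S1) = x := (s7_decomp y₁ x).symm
  have hABcl : IsClosed (K₁ ∪ K₂) := (hclosed K₁ hK₁).union (hclosed K₂ hK₂)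
  have hBrestcl : IsClosed (⋃₀ (MS \ {K₁, K₂})) := by
    rw [Set.sUnion_eq_biUnion]
    exact Set.Finite.isClosed_biUnion (hfin.subset Set.diff_subset)
      (fun M hM => hclosed M (Set.diff_subset hM))
  have hAty12 : ∀ y ∈ K₁ ∪ K₂, ∃ M ∈ MS, y ∈ M := by
    rintro y (hy | hy)
    exacts [⟨K₁, hK₁, hy⟩, ⟨K₂, hK₂, hy⟩]
  have hBtyR : ∀ y ∈ ⋃₀ (MS \ {K₁, K₂}), ∃ M ∈ MS, y ∈ M := by
    rintro y ⟨M, hM, hyM⟩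
    exact ⟨M, hM.1, hyM⟩
  have hsep12 : ∀ M ∈ MS, (M ∩ (K₁ ∪ K₂)).Nonempty →
      (M ∩ ⋃₀ (MS \ {K₁, K₂})).Nonempty → False := by
    rintro M hM ⟨y, hyM, hyA⟩ ⟨y', hy'M, M', hM', hy'M'⟩
    have hM12 : M = K₁ ∨ M = K₂ := by
      rcases hyA with hy1 | hy2
      · left
        by_contra hne
        have hm : y ∈ M ∩ K₁ := ⟨hyM, hy1⟩
        rw [hdisjMS M hM K₁ hK₁ hne] at hm
        exact hm
      · right
        by_contra hne
        have hm : y ∈ M ∩ K₂ := ⟨hyM, hy2⟩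
        rw [hdisjMS M hM K₂ hK₂ hne] at hm
        exact hm
    have hMM' : M = M' := by
      by_contra hne
      have hm : y' ∈ M ∩ M' := ⟨hy'M, hy'M'⟩
      rw [hdisjMS M hM M' hM'.1 hne] at hm
      exact hm
    apply hM'.2
    rw [← hMM']
    rcases hM12 with rfl | rfl
    · exact Set.mem_insert _ _
    · exact Set.mem_insert_of_mem _ rfl
  have hcover12 : ⋃₀ MS ⊆ (K₁ ∪ K₂) ∪ ⋃₀ (MS \ {K₁, K₂}) := by
    rintro y ⟨M, hM, hyM⟩
    by_cases h1 : M = K₁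
    · exact Or.inl (Or.inl (h1 ▸ hyM))
    by_cases h2 : M = K₂
    · exact Or.inl (Or.inr (h2 ▸ hyM))
    · exact Or.inr ⟨M, ⟨hM, by simp [h1, h2]⟩, hyM⟩
  have hKmem : K ∈ MS \ {K₁, K₂} := ⟨hK, by simp [hKK₁, hKK₂]⟩
  have hp1 : f (y₁ + (((0:ℝ)):S1)) ∈ K₁ ∪ K₂ := by
    rw [s7_coe_zero, add_zero]
    exact Or.inl hfy₁
  have hq1' : f (y₁ + ((tx:ℝ):S1)) ∈ ⋃₀ (MS \ {K₁, K₂}) := by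
    rw [hγx]
    exact ⟨K, hKmem, hwK⟩
  obtain ⟨T₁, v₁, u₁, hT₁m, hpv₁, hvu₁, hu₁q, hT₁eq⟩ :=
    s7_walk_produce hABcl hBrestcl hAty12 hBtyR hsep12 hcover12 f y₁
      (le_refl (0:ℝ)) htx0 (lt_trans htxs hs1) hp1 hq1'
  have hsep21 : ∀ M ∈ MS, (M ∩ ⋃₀ (MS \ {K₁, K₂})).Nonempty →
      (M ∩ (K₁ ∪ K₂)).Nonempty → False :=
    fun M hM h1 h2 => hsep12 M hM h2 h1
  have hcover21 : ⋃₀ MS ⊆ ⋃₀ (MS \ {K₁, K₂}) ∪ (K₁ ∪ K₂) := by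
    intro y hy
    rcases hcover12 hy with h | h
    exacts [Or.inr h, Or.inl h]
  have hq2 : f (y₁ + ((s:ℝ):S1)) ∈ K₁ ∪ K₂ := by
    rw [show y₁ + ((s:ℝ):S1) = x₂ from (s7_decomp y₁ x₂).symm]
    exact Or.inr hfx₂
  obtain ⟨T₂, v₂, u₂, hT₂m, hpv₂, hvu₂, hu₂q, hT₂eq⟩ :=
    s7_walk_produce hBrestcl hABcl hBtyR hAty12 hsep21 hcover21 f y₁
      (le_of_lt htx0) htxs hs1 hq1' hq2
  -- T₁ ≠ T₂
  have hT₁₂ : T₁ ≠ T₂ := by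
    intro he
    obtain ⟨y, hy⟩ := hT₁m.1.1
    have hy2 : y ∈ T₂ := he ▸ hy
    rw [hT₁eq] at hy
    rw [hT₂eq] at hy2
    have hmem : y ∈ f '' ({x | v₁ < argS1 (x - y₁) ∧ argS1 (x - y₁) < u₁} ∩
        {x | v₂ < argS1 (x - y₁) ∧ argS1 (x - y₁) < u₂}) := by
      rw [Set.image_inter f.injective]
      exact ⟨hy, hy2⟩
    obtain ⟨z, ⟨⟨hz1, hz2⟩, ⟨hz3, hz4⟩⟩, -⟩ := hmem
    have h7 : u₁ ≤ tx := hu₁q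
    have h8 : tx ≤ v₂ := hpv₂
    linarith
  -- both T₁, T₂ lie inside f '' (open arc I)
  have hsubI : ∀ (vv uu : ℝ), 0 ≤ vv → uu ≤ s →
      f '' {x | vv < argS1 (x - y₁) ∧ argS1 (x - y₁) < uu} ⊆ f '' openArc y₁ x₂ := by
    intro vv uu h0 hus
    apply Set.image_mono
    rintro y ⟨h1, h2⟩
    exact ⟨lt_of_le_of_lt h0 h1, lt_of_lt_of_le h2 hus⟩
  have hT₁I : T₁ ⊆ f '' openArc y₁ x₂ := by
    rw [hT₁eq]
    exact hsubI v₁ u₁ hpv₁ (le_trans hu₁q htxs.le)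
  have hT₂I : T₂ ⊆ f '' openArc y₁ x₂ := by
    rw [hT₂eq]
    exact hsubI v₂ u₂ (le_trans htx0.le hpv₂) hu₂q
  -- surjectivity of pick on the finite family of mixed gaps
  obtain ⟨W₁, hW₁G, hpW₁⟩ := hsurj hT₁m
  obtain ⟨W₂, hW₂G, hpW₂⟩ := hsurj hT₂m
  have hWI : ∀ (W T : Set S1), W ∈ {T | s7Mixed MS T} → pick W = T →
      T ⊆ f '' openArc y₁ x₂ → W = openArc y₁ x₂ := by
    intro W T hWG hpW hTI
    obtain ⟨y, hy⟩ := (hpick W hWG).1.1.1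
    have hy1 : y ∈ f '' W := (hpick W hWG).2 hy
    have hy2 : y ∈ f '' openArc y₁ x₂ := hTI (hpW ▸ hy)
    have hyin : y ∈ f '' (W ∩ openArc y₁ x₂) := by
      rw [Set.image_inter f.injective]
      exact ⟨hy1, hy2⟩
    rcases s7_gap_disjoint hWG.1 hIgap hMy₁ with he | hdis
    · exact he
    · rw [hdis] at hyin
      simp at hyin
  have hW₁I : W₁ = openArc y₁ x₂ := hWI W₁ T₁ hW₁G hpW₁ hT₁I
  have hW₂I : W₂ = openArc y₁ x₂ := hWI W₂ T₂ hW₂G hpW₂ hT₂I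
  apply hT₁₂
  rw [← hpW₁, ← hpW₂, hW₁I, hW₂I]


end
end

section
/- Let (F,ν) be an RDS of circle homeomorphisms without finite orbits, let d be the number of ergodic stationary measures, and let u_1,…,u_d be the weight maps. Then for every i ∈ {1,…,d}, the sets {x ∈ S¹ : u_i(x) = 0} and {x ∈ S¹ : u_i(x) = 1} are F-invariant (i.e., mapped into themselves by every f ∈ F). -/
open MeasureTheory Set Function Filter Topology
open scoped ENNReal NNReal

noncomputable section

/-- Topology on the homeomorphism group of the circle: induced by the compact-open
topologies on the map and on its inverse. -/
instance : TopologicalSpace HomS1 :=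
  TopologicalSpace.induced
    (fun f : HomS1 => ((f : C(S1, S1)), ((f.symm : C(S1, S1))))) inferInstance

instance : MeasurableSpace HomS1 := borel HomS1
instance : BorelSpace HomS1 := ⟨rfl⟩

/-- The topological support of a measure. -/
def measSupport {α : Type*} [TopologicalSpace α] [MeasurableSpace α]
    (μ : Measure α) : Set α :=
  {x | ∀ U : Set α, IsOpen U → x ∈ U → 0 < μ U}

/-- A probability measure `μ` on the circle is stationary for the RDS given by `ν`,
i.e. `μ = ∫ f_* μ dν(f)` (equivalently, `ν^ℕ ⊗ μ` is invariant under the skew shift). -/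
def IsStationaryMeasure (ν : Measure HomS1) (μ : Measure S1) : Prop :=
  IsProbabilityMeasure μ ∧
    ∀ A : Set S1, MeasurableSet A → μ A = ∫⁻ f : HomS1, μ (⇑f ⁻¹' A) ∂ν

/-- A stationary measure is ergodic iff it is an extreme point of the convex set
of stationary probability measures (equivalently, `ν^ℕ ⊗ μ` is ergodic for the
skew shift). -/
def IsErgodicStationaryMeasure (ν : Measure HomS1) (μ : Measure S1) : Prop :=
  IsStationaryMeasure ν μ ∧
    ∀ μ₁ μ₂ : Measure S1, IsStationaryMeasure ν μ₁ → IsStationaryMeasure ν μ₂ →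
      ∀ t : ℝ≥0∞, 0 < t → t < 1 → μ = t • μ₁ + (1 - t) • μ₂ → μ₁ = μ ∧ μ₂ = μ

/-- One step of the Markov chain: the law of `f x` with `f ∼ ν`, `x ∼ μ`. -/
def stepM (ν : Measure HomS1) (μ : Measure S1) : Measure S1 :=
  (ν.prod μ).map fun p => p.1 p.2

/-- The `n`-step distribution of the Markov chain started at `x`. -/
def iterM (ν : Measure HomS1) (x : S1) (n : ℕ) : Measure S1 :=
  (stepM ν)^[n] (Measure.dirac x)

/-- The Cesàro average `(1/N) ∑_{n<N} ∫ δ_{f_ω^n(x)} dν^ℕ(ω)` of the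
transfer-operator orbit of `δ_x`, tested against the continuous function `g`. -/
def cesaroInt (ν : Measure HomS1) (x : S1) (g : C(S1, ℝ)) (N : ℕ) : ℝ :=
  (N : ℝ)⁻¹ * ∑ n ∈ Finset.range N, ∫ y, g y ∂(iterM ν x n)

/-- `μ` enumerates (without repetition) the ergodic stationary measures of the RDS `ν`;
in particular `d` is the number of ergodic stationary measures. -/
def IsErgodicEnumeration (ν : Measure HomS1) {d : ℕ} (μ : Fin d → Measure S1) : Prop :=
  Function.Injective μ ∧ {m : Measure S1 | IsErgodicStationaryMeasure ν m} = Set.range μ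

/-- `u` is the system of weight maps: continuous `[0,1]`-valued maps summing to `1`
such that for every `x` the Cesàro averages of the transfer-operator orbit of `δ_x`
converge weak-* to `m_x = ∑ i, u i x • μ i`. -/
def IsWeightSystem (ν : Measure HomS1) {d : ℕ} (μ : Fin d → Measure S1)
    (u : Fin d → S1 → ℝ) : Prop :=
  (∀ i, Continuous (u i)) ∧ (∀ i x, u i x ∈ Icc (0 : ℝ) 1) ∧
    (∀ x, ∑ i, u i x = 1) ∧
    ∀ (x : S1) (g : C(S1, ℝ)),
      Tendsto (fun N => cesaroInt ν x g N) atTop (𝓝 (∑ i, u i x * ∫ y, g y ∂(μ i)))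

/-- Indices `i` and `j` are neighbors: `{u_i > 0} ∩ {u_j > 0} ≠ ∅`. -/
def Neighbor {d : ℕ} (u : Fin d → S1 → ℝ) (i j : Fin d) : Prop :=
  ({x | 0 < u i x} ∩ {x | 0 < u j x}).Nonempty

/-- The inverse RDS: the pushforward of `ν` under `f ↦ f⁻¹`. -/
def invRDS (ν : Measure HomS1) : Measure HomS1 :=
  ν.map (fun f : HomS1 => f.symm)

/-! ### Auxiliary machinery for the proof -/

section AuxStatement8

theorem cont_eval : Continuous (fun p : HomS1 × S1 => p.1 p.2) := by
  have h1 : Continuous (fun f : HomS1 => (f : C(S1, S1))) :=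
    by exact Continuous.fst (continuous_induced_dom : @Continuous HomS1 (C(S1, S1) × C(S1, S1))
      (TopologicalSpace.induced (fun f : HomS1 => ((f : C(S1, S1)), ((f.symm : C(S1, S1)))))
        inferInstance) _ (fun f : HomS1 => ((f : C(S1, S1)), ((f.symm : C(S1, S1))))))
  have h2 : Continuous (fun p : C(S1, S1) × S1 => p.1 p.2) := ContinuousEval.continuous_eval
  exact h2.comp (h1.prodMap continuous_id)

theorem meas_eval : Measurable (fun p : HomS1 × S1 => p.1 p.2) := cont_eval.measurable

theorem cont_evalx (x : S1) : Continuous (fun f : HomS1 => f x) :=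
  cont_eval.comp (continuous_id.prodMk continuous_const)

theorem meas_fiber (m : Measure S1) [SFinite m] {A : Set S1} (hA : MeasurableSet A) :
    Measurable (fun f : HomS1 => m (⇑f ⁻¹' A)) :=
  measurable_measure_prodMk_left (meas_eval hA)

/-- Stationarity of a (sub)measure, as an equation. -/
def Stat (ν : Measure HomS1) (m : Measure S1) : Prop :=
  ∀ A : Set S1, MeasurableSet A → m A = ∫⁻ f : HomS1, m (⇑f ⁻¹' A) ∂ν

/-- The transfer operator acting on measures. -/
def tstar (ν : Measure HomS1) (m : Measure S1) : Measure S1 :=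
  (ν.prod m).map (fun p : HomS1 × S1 => p.1 p.2)

theorem tstar_apply (ν : Measure HomS1) [IsProbabilityMeasure ν] (m : Measure S1) [SFinite m]
    {A : Set S1} (hA : MeasurableSet A) :
    tstar ν m A = ∫⁻ f : HomS1, m (⇑f ⁻¹' A) ∂ν := by
  rw [tstar, Measure.map_apply meas_eval hA, Measure.prod_apply (meas_eval hA)]
  rfl

theorem stat_iff (ν : Measure HomS1) [IsProbabilityMeasure ν] (m : Measure S1) [SFinite m] :
    Stat ν m ↔ tstar ν m = m := by
  constructor
  · intro h
    ext A hA
    rw [tstar_apply ν m hA, ← h A hA]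
  · intro h A hA
    conv_lhs => rw [← h]
    rw [tstar_apply ν m hA]

theorem tstar_mass (ν : Measure HomS1) [IsProbabilityMeasure ν] (m : Measure S1) [SFinite m] :
    tstar ν m Set.univ = m Set.univ := by
  rw [tstar_apply ν m MeasurableSet.univ]
  simp

theorem tstar_add (ν : Measure HomS1) [IsProbabilityMeasure ν] (m m' : Measure S1)
    [SFinite m] [SFinite m'] : tstar ν (m + m') = tstar ν m + tstar ν m' := by
  rw [tstar, tstar, tstar, Measure.prod_add, Measure.map_add _ _ meas_eval]

theorem stat_smul (ν : Measure HomS1) [IsProbabilityMeasure ν] {m : Measure S1}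
    [IsFiniteMeasure m] (c : ℝ≥0∞) (hm : Stat ν m) : Stat ν (c • m) := by
  intro A hA
  simp only [Measure.smul_apply, smul_eq_mul]
  rw [hm A hA, ← lintegral_const_mul c (meas_fiber m hA)]

theorem stat_sub (ν : Measure HomS1) [IsProbabilityMeasure ν] {m m' : Measure S1}
    [IsFiniteMeasure m] [IsFiniteMeasure m'] (hle : m' ≤ m) (hm : Stat ν m) (hm' : Stat ν m') :
    Stat ν (m - m') := by
  intro A hA
  have hfin : ∫⁻ f : HomS1, m' (⇑f ⁻¹' A) ∂ν ≠ ∞ := by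
    rw [← hm' A hA]
    exact measure_ne_top m' A
  have hleae : (fun f : HomS1 => m' (⇑f ⁻¹' A)) ≤ᵐ[ν] fun f : HomS1 => m (⇑f ⁻¹' A) :=
    ae_of_all _ fun f => Measure.le_iff'.mp hle _
  rw [Measure.sub_apply hA hle, hm A hA, hm' A hA,
    ← lintegral_sub (meas_fiber m' hA) hfin hleae]
  refine lintegral_congr fun f => ?_
  exact (Measure.sub_apply (hA.preimage (Homeomorph.measurable f)) hle).symm

theorem meas_eq_of_le {m m' : Measure S1} [IsFiniteMeasure m'] (h : m ≤ m')
    (hu : m' Set.univ ≤ m Set.univ) : m = m' := by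
  ext A hA
  refine le_antisymm (Measure.le_iff'.mp h A) ?_
  have h1 := measure_add_measure_compl (μ := m) hA
  have h2 := measure_add_measure_compl (μ := m') hA
  have hc : m Aᶜ ≤ m' Aᶜ := Measure.le_iff'.mp h _
  have hcle : m' A + m Aᶜ ≤ m A + m Aᶜ := by
    calc m' A + m Aᶜ ≤ m' A + m' Aᶜ := by gcongr
    _ = m' Set.univ := h2
    _ ≤ m Set.univ := hu
    _ = m A + m Aᶜ := h1.symm
  have hfin : m Aᶜ ≠ ∞ := (lt_of_le_of_lt hc (measure_lt_top m' _)).ne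
  exact (ENNReal.add_le_add_iff_right hfin).mp hcle

/-- An extreme stationary probability dominating a nonzero stationary part forces
the part to be proportional. -/
theorem extreme_part (ν : Measure HomS1) [IsProbabilityMeasure ν] {m e : Measure S1}
    [IsFiniteMeasure e] (hm : IsStationaryMeasure ν m)
    (hext : ∀ μ₁' μ₂' : Measure S1, IsStationaryMeasure ν μ₁' → IsStationaryMeasure ν μ₂' →
      ∀ t : ℝ≥0∞, 0 < t → t < 1 → m = t • μ₁' + (1 - t) • μ₂' → μ₁' = m ∧ μ₂' = m)
    (hstat : Stat ν e) (hle : ∀ A : Set S1, MeasurableSet A → e A ≤ m A)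
    (hne0 : e Set.univ ≠ 0) (hlt1 : e Set.univ < 1) :
    e = e Set.univ • m := by
  obtain ⟨hmp, hms⟩ := hm
  haveI := hmp
  have htop : e Set.univ ≠ ∞ := (lt_of_lt_of_le hlt1 le_top).ne
  have hle' : e ≤ m := Measure.le_iff.mpr hle
  have h1t : (1 : ℝ≥0∞) - e Set.univ ≠ 0 := by
    rw [Ne, tsub_eq_zero_iff_le, not_le]
    exact hlt1
  have h1top : (1 : ℝ≥0∞) - e Set.univ ≠ ∞ :=
    (lt_of_le_of_lt tsub_le_self ENNReal.one_lt_top).ne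
  have hq_stat : Stat ν (m - e) := stat_sub ν hle' hms hstat
  have hp : IsStationaryMeasure ν ((e Set.univ)⁻¹ • e) := by
    refine ⟨⟨?_⟩, stat_smul ν _ hstat⟩
    rw [Measure.smul_apply, smul_eq_mul]
    exact ENNReal.inv_mul_cancel hne0 htop
  have hqmass : (m - e) Set.univ = 1 - e Set.univ := by
    rw [Measure.sub_apply MeasurableSet.univ hle', measure_univ]
  have hq : IsStationaryMeasure ν ((1 - e Set.univ)⁻¹ • (m - e)) := by
    refine ⟨⟨?_⟩, stat_smul ν _ hq_stat⟩
    rw [Measure.smul_apply, smul_eq_mul, hqmass]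
    exact ENNReal.inv_mul_cancel h1t h1top
  have hdecomp : m = e Set.univ • ((e Set.univ)⁻¹ • e)
      + (1 - e Set.univ) • ((1 - e Set.univ)⁻¹ • (m - e)) := by
    rw [smul_smul, smul_smul, ENNReal.mul_inv_cancel hne0 htop,
      ENNReal.mul_inv_cancel h1t h1top, one_smul, one_smul]
    ext A hA
    rw [Measure.add_apply, Measure.sub_apply hA hle', add_tsub_cancel_of_le (hle A hA)]
  obtain ⟨hp_eq, -⟩ := hext _ _ hp hq (e Set.univ) (zero_lt_iff.mpr hne0) hlt1 hdecomp
  calc e = e Set.univ • ((e Set.univ)⁻¹ • e) := by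
        rw [smul_smul, ENNReal.mul_inv_cancel hne0 htop, one_smul]
    _ = e Set.univ • m := by rw [hp_eq]

/-- Distinct ergodic stationary measures are mutually singular. -/
theorem ergodic_singular (ν : Measure HomS1) [IsProbabilityMeasure ν] {μ₁ μ₂ : Measure S1}
    (h₁ : IsErgodicStationaryMeasure ν μ₁) (h₂ : IsErgodicStationaryMeasure ν μ₂)
    (hne : μ₁ ≠ μ₂) : μ₁ ⟂ₘ μ₂ := by
  obtain ⟨⟨hp₁, hs₁⟩, he₁⟩ := h₁
  obtain ⟨⟨hp₂, hs₂⟩, he₂⟩ := h₂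
  haveI := hp₁; haveI := hp₂
  obtain ⟨P, hP, hPle, hPge⟩ := hahn_decomposition (μ := μ₁) (ν := μ₂)
  set dp : Measure S1 := μ₁.restrict P - μ₂.restrict P with hdp
  set dm : Measure S1 := μ₂.restrict Pᶜ - μ₁.restrict Pᶜ with hdm
  have hrle_p : μ₂.restrict P ≤ μ₁.restrict P := by
    refine Measure.le_iff.mpr fun A hA => ?_
    rw [Measure.restrict_apply hA, Measure.restrict_apply hA]
    exact hPle _ (hA.inter hP) inter_subset_right
  have hrle_m : μ₁.restrict Pᶜ ≤ μ₂.restrict Pᶜ := by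
    refine Measure.le_iff.mpr fun A hA => ?_
    rw [Measure.restrict_apply hA, Measure.restrict_apply hA]
    exact hPge _ (hA.inter hP.compl) inter_subset_right
  have dp_apply : ∀ A : Set S1, MeasurableSet A → dp A = μ₁ (A ∩ P) - μ₂ (A ∩ P) := by
    intro A hA
    rw [hdp, Measure.sub_apply hA hrle_p, Measure.restrict_apply hA, Measure.restrict_apply hA]
  have dm_apply : ∀ A : Set S1, MeasurableSet A → dm A = μ₂ (A ∩ Pᶜ) - μ₁ (A ∩ Pᶜ) := by
    intro A hA
    rw [hdm, Measure.sub_apply hA hrle_m, Measure.restrict_apply hA, Measure.restrict_apply hA]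
  have dp_le : ∀ A : Set S1, MeasurableSet A → dp A ≤ μ₁ A := by
    intro A hA
    rw [dp_apply A hA]
    exact le_trans tsub_le_self (measure_mono inter_subset_left)
  have dm_le : ∀ A : Set S1, MeasurableSet A → dm A ≤ μ₂ A := by
    intro A hA
    rw [dm_apply A hA]
    exact le_trans tsub_le_self (measure_mono inter_subset_left)
  haveI hfin_dp : IsFiniteMeasure dp := by
    rw [hdp]; exact Measure.isFiniteMeasure_sub
  haveI hfin_dm : IsFiniteMeasure dm := by
    rw [hdm]; exact Measure.isFiniteMeasure_sub
  have key : ∀ A : Set S1, MeasurableSet A → μ₁ A + dm A = μ₂ A + dp A := by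
    intro A hA
    rw [dp_apply A hA, dm_apply A hA, ← measure_inter_add_diff (μ := μ₁) A hP,
      ← measure_inter_add_diff (μ := μ₂) A hP, diff_eq]
    have hc : μ₂ (A ∩ P) ≤ μ₁ (A ∩ P) := hPle _ (hA.inter hP) inter_subset_right
    have hb : μ₁ (A ∩ Pᶜ) ≤ μ₂ (A ∩ Pᶜ) := hPge _ (hA.inter hP.compl) inter_subset_right
    calc μ₁ (A ∩ P) + μ₁ (A ∩ Pᶜ) + (μ₂ (A ∩ Pᶜ) - μ₁ (A ∩ Pᶜ))
        = μ₁ (A ∩ P) + (μ₁ (A ∩ Pᶜ) + (μ₂ (A ∩ Pᶜ) - μ₁ (A ∩ Pᶜ))) := add_assoc _ _ _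
      _ = μ₁ (A ∩ P) + μ₂ (A ∩ Pᶜ) := by rw [add_tsub_cancel_of_le hb]
      _ = μ₂ (A ∩ P) + (μ₁ (A ∩ P) - μ₂ (A ∩ P)) + μ₂ (A ∩ Pᶜ) := by
          rw [add_tsub_cancel_of_le hc]
      _ = μ₂ (A ∩ P) + μ₂ (A ∩ Pᶜ) + (μ₁ (A ∩ P) - μ₂ (A ∩ P)) := add_right_comm _ _ _
  have keyM : μ₁ + dm = μ₂ + dp := by
    ext A hA
    rw [Measure.add_apply, Measure.add_apply]
    exact key A hA
  have keyT : μ₁ + tstar ν dm = μ₂ + tstar ν dp := by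
    have hcongr := congrArg (tstar ν) keyM
    rwa [tstar_add ν μ₁ dm, tstar_add ν μ₂ dp, (stat_iff ν μ₁).mp hs₁,
      (stat_iff ν μ₂).mp hs₂] at hcongr
  have key3 : ∀ A : Set S1, MeasurableSet A → dp A + tstar ν dm A = tstar ν dp A + dm A := by
    intro A hA
    have e1 : μ₁ A + tstar ν dm A = μ₂ A + tstar ν dp A := by
      rw [← Measure.add_apply, ← Measure.add_apply, keyT]
    have e2 := key A hA
    rw [← ENNReal.add_right_inj (measure_ne_top μ₂ A)]
    calc μ₂ A + (dp A + tstar ν dm A) = μ₂ A + dp A + tstar ν dm A := (add_assoc _ _ _).symm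
      _ = μ₁ A + dm A + tstar ν dm A := by rw [e2]
      _ = μ₁ A + tstar ν dm A + dm A := add_right_comm _ _ _
      _ = μ₂ A + tstar ν dp A + dm A := by rw [e1]
      _ = μ₂ A + (tstar ν dp A + dm A) := add_assoc _ _ _
  have dpPc : dp Pᶜ = 0 := by
    rw [dp_apply _ hP.compl]
    simp [Set.compl_inter_self]
  have dmP : dm P = 0 := by
    rw [dm_apply _ hP]
    simp [Set.inter_compl_self]
  have dpU : dp Set.univ = dp P := by
    have h := measure_add_measure_compl (μ := dp) hP
    rw [dpPc, add_zero] at h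
    exact h.symm
  have dmU : dm Set.univ = dm Pᶜ := by
    have h := measure_add_measure_compl (μ := dm) hP
    rw [dmP, zero_add] at h
    exact h.symm
  have e4 : dp P + tstar ν dm P = tstar ν dp P := by
    have h := key3 P hP
    rwa [dmP, add_zero] at h
  have hle1 : tstar ν dp P ≤ dp P := by
    calc tstar ν dp P ≤ tstar ν dp Set.univ := measure_mono (subset_univ P)
      _ = dp Set.univ := tstar_mass ν dp
      _ = dp P := dpU
  have hdmP0 : tstar ν dm P = 0 := by
    by_contra h
    have hlt : dp P < dp P + tstar ν dm P :=
      ENNReal.lt_add_right (measure_ne_top dp P) h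
    rw [e4] at hlt
    exact absurd hle1 (not_le.mpr hlt)
  have e5 : tstar ν dp P = dp P := by rw [← e4, hdmP0, add_zero]
  have e6 : tstar ν dp Pᶜ = 0 := by
    have h := measure_add_measure_compl (μ := tstar ν dp) hP
    rw [e5, tstar_mass ν dp, dpU] at h
    exact (ENNReal.add_right_inj (measure_ne_top dp P)).mp (h.trans (add_zero _).symm)
  have e7 : tstar ν dm Pᶜ = dm Pᶜ := by
    have h := key3 Pᶜ hP.compl
    rwa [dpPc, e6, zero_add, zero_add] at h
  have hsplit : ∀ (m : Measure S1) (A : Set S1), m A = m (A ∩ P) + m (A ∩ Pᶜ) := by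
    intro m A
    have h := (measure_inter_add_diff (μ := m) A hP).symm
    rwa [diff_eq] at h
  have hdp_stat : tstar ν dp = dp := by
    ext A hA
    have h1 : tstar ν dp (A ∩ P) = dp (A ∩ P) := by
      have h3 := key3 (A ∩ P) (hA.inter hP)
      have h4 : tstar ν dm (A ∩ P) = 0 := measure_mono_null inter_subset_right hdmP0
      have h5 : dm (A ∩ P) = 0 := measure_mono_null inter_subset_right dmP
      rw [h4, h5, add_zero, add_zero] at h3
      exact h3.symm
    have h2 : tstar ν dp (A ∩ Pᶜ) = 0 := measure_mono_null inter_subset_right e6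
    have h2' : dp (A ∩ Pᶜ) = 0 := measure_mono_null inter_subset_right dpPc
    rw [hsplit (tstar ν dp) A, hsplit dp A, h1, h2, h2']
  have hdm_stat : tstar ν dm = dm := by
    ext A hA
    have h1 : tstar ν dm (A ∩ Pᶜ) = dm (A ∩ Pᶜ) := by
      have h3 := key3 (A ∩ Pᶜ) (hA.inter hP.compl)
      have h4 : tstar ν dp (A ∩ Pᶜ) = 0 := measure_mono_null inter_subset_right e6
      have h5 : dp (A ∩ Pᶜ) = 0 := measure_mono_null inter_subset_right dpPc
      rw [h4, h5, zero_add, zero_add] at h3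
      exact h3
    have h2 : tstar ν dm (A ∩ P) = 0 := measure_mono_null inter_subset_right hdmP0
    have h2' : dm (A ∩ P) = 0 := measure_mono_null inter_subset_right dmP
    rw [hsplit (tstar ν dm) A, hsplit dm A, h1, h2, h2']
  have hdmu : dm Set.univ = dp Set.univ := by
    have h := key Set.univ MeasurableSet.univ
    rw [measure_univ (μ := μ₁), measure_univ (μ := μ₂)] at h
    exact (ENNReal.add_right_inj ENNReal.one_ne_top).mp h
  have hne0 : dp Set.univ ≠ 0 := by
    intro h0
    apply hne
    have hdp0 : dp = 0 := Measure.measure_univ_eq_zero.mp h0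
    have hdm0 : dm = 0 := Measure.measure_univ_eq_zero.mp (by rw [hdmu]; exact h0)
    ext A hA
    have h := key A hA
    rw [hdp0, hdm0] at h
    simpa using h
  have hle_one : dp Set.univ ≤ 1 := by
    have := dp_le Set.univ MeasurableSet.univ
    rwa [measure_univ (μ := μ₁)] at this
  have main : μ₁ Pᶜ = 0 ∧ μ₂ P = 0 := by
    rcases eq_or_lt_of_le hle_one with hone | hlt
    · have hdpm : dp = μ₁ :=
        meas_eq_of_le (Measure.le_iff.mpr dp_le) (by rw [measure_univ, hone])
      have hdmm : dm = μ₂ :=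
        meas_eq_of_le (Measure.le_iff.mpr dm_le) (by rw [measure_univ, hdmu, hone])
      exact ⟨by rw [← hdpm]; exact dpPc, by rw [← hdmm]; exact dmP⟩
    · have h1 := extreme_part ν ⟨hp₁, hs₁⟩ he₁ ((stat_iff ν dp).mpr hdp_stat) dp_le hne0 hlt
      have h2 := extreme_part ν ⟨hp₂, hs₂⟩ he₂ ((stat_iff ν dm).mpr hdm_stat) dm_le
        (by rw [hdmu]; exact hne0) (by rw [hdmu]; exact hlt)
      constructor
      · have hz : dp Set.univ * μ₁ Pᶜ = 0 := by
          have := congrArg (fun m : Measure S1 => m Pᶜ) h1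
          simp only [Measure.smul_apply, smul_eq_mul] at this
          rw [dpPc] at this
          exact this.symm
        rcases mul_eq_zero.mp hz with h | h
        · exact absurd h hne0
        · exact h
      · have hz : dm Set.univ * μ₂ P = 0 := by
          have := congrArg (fun m : Measure S1 => m P) h2
          simp only [Measure.smul_apply, smul_eq_mul] at this
          rw [dmP] at this
          exact this.symm
        rcases mul_eq_zero.mp hz with h | h
        · rw [hdmu] at h
          exact absurd h hne0
        · exact h
  exact ⟨Pᶜ, hP.compl, main.1, by rw [compl_compl]; exact main.2⟩

end AuxStatement8

section AuxStatement8b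

theorem exists_bound {g : S1 → ℝ} (hg : Continuous g) : ∃ M : ℝ, 0 ≤ M ∧ ∀ y, |g y| ≤ M := by
  obtain ⟨y₀, -, hy₀⟩ := isCompact_univ.exists_isMaxOn univ_nonempty (hg.abs.continuousOn)
  exact ⟨|g y₀|, abs_nonneg _, fun y => hy₀ (mem_univ y)⟩

theorem int_abs_le {α : Type*} [MeasurableSpace α] (m : Measure α) [IsProbabilityMeasure m]
    {h : α → ℝ} {M : ℝ} (hb : ∀ a, |h a| ≤ M) : |∫ a, h a ∂m| ≤ M := by
  have h1 : ‖∫ a, h a ∂m‖ ≤ ∫ a, ‖h a‖ ∂m := norm_integral_le_integral_norm h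
  have h2 : ∫ a, ‖h a‖ ∂m ≤ ∫ _a, M ∂m := by
    apply integral_mono_of_nonneg (ae_of_all _ fun a => norm_nonneg _) (integrable_const M)
    exact ae_of_all _ fun a => by simpa [Real.norm_eq_abs] using hb a
  have h3 : ∫ _a, M ∂m = M := by simp
  rw [Real.norm_eq_abs] at h1
  linarith

theorem int_bdd {α : Type*} [MeasurableSpace α] (m : Measure α) [IsFiniteMeasure m]
    {h : α → ℝ} {M : ℝ} (hb : ∀ a, |h a| ≤ M) (hm : AEStronglyMeasurable h m) :
    Integrable h m :=
  (integrable_const M).mono' hm (ae_of_all _ fun a => by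
    simpa [Real.norm_eq_abs] using hb a)

/-- One application of the annealed transfer operator to a test function. -/
def Qop (ν : Measure HomS1) (g : S1 → ℝ) (y : S1) : ℝ := ∫ f : HomS1, g (f y) ∂ν

/-- The test function integrated against the `n`-step distribution. -/
def Phi (ν : Measure HomS1) (g : S1 → ℝ) (n : ℕ) (x : S1) : ℝ := ∫ y, g y ∂(iterM ν x n)

theorem iterM_zero (ν : Measure HomS1) (x : S1) : iterM ν x 0 = Measure.dirac x := rfl

theorem iterM_succ (ν : Measure HomS1) (x : S1) (n : ℕ) :
    iterM ν x (n + 1) = stepM ν (iterM ν x n) := by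
  rw [iterM, iterM, Function.iterate_succ_apply']

theorem iterM_prob (ν : Measure HomS1) [IsProbabilityMeasure ν] (x : S1) (n : ℕ) :
    IsProbabilityMeasure (iterM ν x n) := by
  induction n with
  | zero => rw [iterM_zero]; infer_instance
  | succ n ih =>
    rw [iterM_succ]
    haveI := ih
    unfold stepM
    exact Measure.isProbabilityMeasure_map meas_eval.aemeasurable

theorem stepM_integral (ν : Measure HomS1) [IsProbabilityMeasure ν] (m : Measure S1)
    [IsProbabilityMeasure m] {g : S1 → ℝ} (hg : Continuous g) :
    ∫ z, g z ∂(stepM ν m) = ∫ y, Qop ν g y ∂m := by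
  obtain ⟨M, hM0, hM⟩ := exists_bound hg
  have hev : AEStronglyMeasurable (fun p : HomS1 × S1 => g (p.1 p.2)) (ν.prod m) :=
    (hg.comp cont_eval).aestronglyMeasurable
  have hint : Integrable (fun p : HomS1 × S1 => g (p.1 p.2)) (ν.prod m) :=
    int_bdd _ (fun p => hM _) hev
  rw [stepM, integral_map meas_eval.aemeasurable hg.aestronglyMeasurable,
    integral_prod_symm _ hint]
  rfl

theorem Qop_bound (ν : Measure HomS1) [IsProbabilityMeasure ν] {g : S1 → ℝ} {M : ℝ}
    (hb : ∀ y, |g y| ≤ M) (y : S1) : |Qop ν g y| ≤ M :=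
  int_abs_le ν (fun f => hb (f y))

theorem Qop_cont (ν : Measure HomS1) [IsProbabilityMeasure ν] {g : S1 → ℝ}
    (hg : Continuous g) : Continuous (Qop ν g) := by
  obtain ⟨M, hM0, hM⟩ := exists_bound hg
  rw [continuous_iff_seqContinuous]
  intro z p hz
  have key : Tendsto (fun n => ∫ f : HomS1, g (f (z n)) ∂ν) atTop
      (𝓝 (∫ f : HomS1, g (f p) ∂ν)) := by
    apply tendsto_integral_of_dominated_convergence (fun _ => M)
    · exact fun n => (hg.comp (cont_evalx (z n))).aestronglyMeasurable
    · exact integrable_const M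
    · exact fun n => ae_of_all _ fun f => by simpa [Real.norm_eq_abs] using hM (f (z n))
    · exact ae_of_all _ fun f => ((hg.comp f.continuous).tendsto p).comp hz
  exact key

theorem Phi_zero (ν : Measure HomS1) (g : S1 → ℝ) (x : S1) : Phi ν g 0 x = g x := by
  rw [Phi, iterM_zero, integral_dirac]

theorem Phi_succ (ν : Measure HomS1) [IsProbabilityMeasure ν] {g : S1 → ℝ}
    (hg : Continuous g) (n : ℕ) (x : S1) : Phi ν g (n + 1) x = Phi ν (Qop ν g) n x := by
  rw [Phi, iterM_succ]
  haveI := iterM_prob ν x n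
  rw [stepM_integral ν (iterM ν x n) hg]
  rfl

theorem Phi_cont (ν : Measure HomS1) [IsProbabilityMeasure ν] :
    ∀ (n : ℕ) {g : S1 → ℝ}, Continuous g → Continuous (fun x => Phi ν g n x) := by
  intro n
  induction n with
  | zero =>
    intro g hg
    have : (fun x => Phi ν g 0 x) = g := funext fun x => Phi_zero ν g x
    rw [this]; exact hg
  | succ n ih =>
    intro g hg
    have : (fun x => Phi ν g (n + 1) x) = fun x => Phi ν (Qop ν g) n x :=
      funext fun x => Phi_succ ν hg n x
    rw [this]
    exact ih (Qop_cont ν hg)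

theorem Phi_bound (ν : Measure HomS1) [IsProbabilityMeasure ν] {g : S1 → ℝ} {M : ℝ}
    (hb : ∀ y, |g y| ≤ M) (n : ℕ) (x : S1) : |Phi ν g n x| ≤ M := by
  haveI := iterM_prob ν x n
  exact int_abs_le _ hb

theorem Phi_rec (ν : Measure HomS1) [IsProbabilityMeasure ν] :
    ∀ (n : ℕ) {g : S1 → ℝ}, Continuous g →
      ∀ x : S1, Phi ν g (n + 1) x = ∫ f : HomS1, Phi ν g n (f x) ∂ν := by
  intro n
  induction n with
  | zero =>
    intro g hg x
    rw [Phi_succ ν hg 0 x, Phi_zero]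
    simp only [Phi_zero]
    rfl
  | succ n ih =>
    intro g hg x
    rw [Phi_succ ν hg (n + 1) x, ih (Qop_cont ν hg) x]
    refine integral_congr_ae (ae_of_all _ fun f => ?_)
    exact (Phi_succ ν hg n (f x)).symm

theorem cesaro_eq (ν : Measure HomS1) (x : S1) (g : C(S1, ℝ)) (N : ℕ) :
    cesaroInt ν x g N = (N : ℝ)⁻¹ * ∑ n ∈ Finset.range N, Phi ν (⇑g) n x := rfl

theorem cesaro_bound (ν : Measure HomS1) [IsProbabilityMeasure ν] (g : C(S1, ℝ)) {M : ℝ}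
    (hM0 : 0 ≤ M) (hb : ∀ y, |g y| ≤ M) (z : S1) (N : ℕ) : |cesaroInt ν z g N| ≤ M := by
  rw [cesaro_eq, abs_mul, abs_inv, Nat.abs_cast]
  rcases Nat.eq_zero_or_pos N with h | h
  · simp [h, hM0]
  · have hsum : |∑ n ∈ Finset.range N, Phi ν (⇑g) n z| ≤ (N : ℝ) * M := by
      calc |∑ n ∈ Finset.range N, Phi ν (⇑g) n z|
          ≤ ∑ n ∈ Finset.range N, |Phi ν (⇑g) n z| := Finset.abs_sum_le_sum_abs _ _
        _ ≤ ∑ _n ∈ Finset.range N, M := Finset.sum_le_sum fun n _ => Phi_bound ν hb n z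
        _ = (N : ℝ) * M := by simp [Finset.sum_const, Finset.card_range, nsmul_eq_mul]
    have hNpos : (0 : ℝ) < (N : ℝ) := by exact_mod_cast h
    calc (N : ℝ)⁻¹ * |∑ n ∈ Finset.range N, Phi ν (⇑g) n z|
        ≤ (N : ℝ)⁻¹ * ((N : ℝ) * M) :=
          mul_le_mul_of_nonneg_left hsum (inv_nonneg.mpr (Nat.cast_nonneg N))
      _ = M := by field_simp

theorem cesaro_cont (ν : Measure HomS1) [IsProbabilityMeasure ν] (g : C(S1, ℝ)) (N : ℕ) :
    Continuous fun z => cesaroInt ν z g N := by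
  have : (fun z => cesaroInt ν z g N)
      = fun z => (N : ℝ)⁻¹ * ∑ n ∈ Finset.range N, Phi ν (⇑g) n z :=
    funext fun z => cesaro_eq ν z g N
  rw [this]
  exact continuous_const.mul (continuous_finset_sum _ fun n _ => Phi_cont ν n g.continuous)

theorem keylimit (ν : Measure HomS1) [IsProbabilityMeasure ν] {d : ℕ} (μ : Fin d → Measure S1)
    (u : Fin d → S1 → ℝ) (hu : IsWeightSystem ν μ u) (x : S1) (g : C(S1, ℝ)) :
    (∑ j, u j x * ∫ y, g y ∂(μ j)) =
      ∫ f : HomS1, (∑ j, u j (f x) * ∫ y, g y ∂(μ j)) ∂ν := by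
  obtain ⟨M, hM0, hM⟩ := exists_bound g.continuous
  set L : S1 → ℝ := fun z => ∑ j, u j z * ∫ y, g y ∂(μ j) with hL
  have hconv : ∀ z, Tendsto (fun N => cesaroInt ν z g N) atTop (𝓝 (L z)) :=
    fun z => hu.2.2.2 z g
  have hfm : ∀ N : ℕ, AEStronglyMeasurable (fun f : HomS1 => cesaroInt ν (f x) g N) ν :=
    fun N => ((cesaro_cont ν g N).comp (cont_evalx x)).aestronglyMeasurable
  have hrec : ∀ N : ℕ, ∫ f : HomS1, cesaroInt ν (f x) g N ∂ν
      = cesaroInt ν x g N + (N : ℝ)⁻¹ * (Phi ν (⇑g) N x - Phi ν (⇑g) 0 x) := by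
    intro N
    have e1 : ∀ f : HomS1, cesaroInt ν (f x) g N
        = (N : ℝ)⁻¹ * ∑ n ∈ Finset.range N, Phi ν (⇑g) n (f x) :=
      fun f => cesaro_eq ν (f x) g N
    have hInt : ∀ n : ℕ, Integrable (fun f : HomS1 => Phi ν (⇑g) n (f x)) ν := fun n =>
      int_bdd ν (fun f => Phi_bound ν hM n (f x))
        (((Phi_cont ν n g.continuous).comp (cont_evalx x)).aestronglyMeasurable)
    calc ∫ f : HomS1, cesaroInt ν (f x) g N ∂ν
        = ∫ f : HomS1, (N : ℝ)⁻¹ * ∑ n ∈ Finset.range N, Phi ν (⇑g) n (f x) ∂ν := by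
          simp only [e1]
      _ = (N : ℝ)⁻¹ * ∫ f : HomS1, ∑ n ∈ Finset.range N, Phi ν (⇑g) n (f x) ∂ν :=
          integral_const_mul _ _
      _ = (N : ℝ)⁻¹ * ∑ n ∈ Finset.range N, ∫ f : HomS1, Phi ν (⇑g) n (f x) ∂ν := by
          rw [integral_finset_sum _ fun n _ => hInt n]
      _ = (N : ℝ)⁻¹ * ∑ n ∈ Finset.range N, Phi ν (⇑g) (n + 1) x := by
          congr 1
          exact Finset.sum_congr rfl fun n _ => (Phi_rec ν n g.continuous x).symm
      _ = cesaroInt ν x g N + (N : ℝ)⁻¹ * (Phi ν (⇑g) N x - Phi ν (⇑g) 0 x) := by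
          rw [cesaro_eq]
          have hsum : ∑ n ∈ Finset.range N, Phi ν (⇑g) (n + 1) x
              = ∑ n ∈ Finset.range N, Phi ν (⇑g) n x
                + (Phi ν (⇑g) N x - Phi ν (⇑g) 0 x) := by
            have h1 := Finset.sum_range_succ (fun n => Phi ν (⇑g) n x) N
            have h2 := Finset.sum_range_succ' (fun n => Phi ν (⇑g) n x) N
            linarith
          rw [hsum]
          ring
  have hlim1 : Tendsto (fun N => ∫ f : HomS1, cesaroInt ν (f x) g N ∂ν) atTop (𝓝 (L x)) := by
    have heq : (fun N => ∫ f : HomS1, cesaroInt ν (f x) g N ∂ν)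
        = fun N => cesaroInt ν x g N + (N : ℝ)⁻¹ * (Phi ν (⇑g) N x - Phi ν (⇑g) 0 x) :=
      funext hrec
    rw [heq]
    have t2 : Tendsto (fun N : ℕ => (N : ℝ)⁻¹ * (Phi ν (⇑g) N x - Phi ν (⇑g) 0 x)) atTop
        (𝓝 0) := by
      apply squeeze_zero_norm (a := fun N : ℕ => (N : ℝ)⁻¹ * (2 * M))
      · intro N
        rw [Real.norm_eq_abs, abs_mul, abs_inv, Nat.abs_cast]
        apply mul_le_mul_of_nonneg_left _ (inv_nonneg.mpr (Nat.cast_nonneg N))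
        have b1 := Phi_bound ν hM N x
        have b2 := Phi_bound ν hM 0 x
        have := abs_sub (Phi ν (⇑g) N x) (Phi ν (⇑g) 0 x)
        calc |Phi ν (⇑g) N x - Phi ν (⇑g) 0 x|
            ≤ |Phi ν (⇑g) N x| + |Phi ν (⇑g) 0 x| := abs_sub _ _
          _ ≤ 2 * M := by linarith
      · simpa using tendsto_inv_atTop_nhds_zero_nat.mul_const (2 * M)
    simpa using (hconv x).add t2
  have hlim2 : Tendsto (fun N => ∫ f : HomS1, cesaroInt ν (f x) g N ∂ν) atTop
      (𝓝 (∫ f : HomS1, L (f x) ∂ν)) := by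
    apply tendsto_integral_of_dominated_convergence (fun _ => M) hfm (integrable_const M)
    · exact fun N => ae_of_all _ fun f => by
        simpa [Real.norm_eq_abs] using cesaro_bound ν g hM0 hM (f x) N
    · exact ae_of_all _ fun f => hconv (f x)
  exact tendsto_nhds_unique hlim1 hlim2

theorem harmonicWeight (ν : Measure HomS1) [IsProbabilityMeasure ν] {d : ℕ} (μ : Fin d → Measure S1)
    (hμ : IsErgodicEnumeration ν μ) (u : Fin d → S1 → ℝ) (hu : IsWeightSystem ν μ u)
    (i : Fin d) (x : S1) : u i x = ∫ f : HomS1, u i (f x) ∂ν := by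
  have hergo : ∀ j, IsErgodicStationaryMeasure ν (μ j) := by
    intro j
    have hmem : μ j ∈ Set.range μ := ⟨j, rfl⟩
    rw [← hμ.2] at hmem
    exact hmem
  have hprob : ∀ j, IsProbabilityMeasure (μ j) := fun j => (hergo j).1.1
  have huint : ∀ j : Fin d, Integrable (fun f : HomS1 => u j (f x)) ν := fun j =>
    int_bdd ν (M := 1)
      (fun f => abs_le.mpr ⟨by linarith [(hu.2.1 j (f x)).1], (hu.2.1 j (f x)).2⟩)
      (((hu.1 j).comp (cont_evalx x)).aestronglyMeasurable)
  have hbnn : ∀ j : Fin d, 0 ≤ ∫ f : HomS1, u j (f x) ∂ν := fun j =>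
    integral_nonneg fun f => (hu.2.1 j (f x)).1
  have hunn : ∀ j, 0 ≤ u j x := fun j => (hu.2.1 j x).1
  have hident : ∀ g : C(S1, ℝ), (∑ j, u j x * ∫ y, g y ∂(μ j))
      = ∑ j, (∫ f : HomS1, u j (f x) ∂ν) * ∫ y, g y ∂(μ j) := by
    intro g
    rw [keylimit ν μ u hu x g,
      integral_finset_sum _ fun j _ => (huint j).mul_const (∫ y, g y ∂(μ j))]
    exact Finset.sum_congr rfl fun j _ => integral_mul_const _ _
  have hAint : ∀ (g : C(S1, ℝ)) (j : Fin d), Integrable (⇑g) (μ j) := by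
    intro g j
    haveI := hprob j
    obtain ⟨M, hM0, hM⟩ := exists_bound g.continuous
    exact int_bdd _ hM g.continuous.aestronglyMeasurable
  have hkey : ∀ (c : Fin d → ℝ), (∀ j, 0 ≤ c j) → ∀ f : BoundedContinuousFunction S1 ℝ≥0,
      ∫⁻ y, (f y : ℝ≥0∞) ∂(∑ j, ENNReal.ofReal (c j) • μ j)
        = ENNReal.ofReal (∑ j, c j * ∫ y,
            (⟨fun z => ((f z : ℝ≥0) : ℝ), NNReal.continuous_coe.comp f.continuous⟩ : C(S1, ℝ)) y
              ∂(μ j)) := by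
    intro c hc f
    set gR : C(S1, ℝ) := ⟨fun z => ((f z : ℝ≥0) : ℝ),
      NNReal.continuous_coe.comp f.continuous⟩ with hgR
    rw [lintegral_finset_sum_measure]
    have hterm : ∀ j : Fin d, ∫⁻ y, (f y : ℝ≥0∞) ∂(ENNReal.ofReal (c j) • μ j)
        = ENNReal.ofReal (c j * ∫ y, gR y ∂(μ j)) := by
      intro j
      haveI := hprob j
      rw [lintegral_smul_measure, lintegral_coe_eq_integral _ (hAint gR j),
        smul_eq_mul, ← ENNReal.ofReal_mul (hc j)]
      rfl
    rw [Finset.sum_congr rfl fun j _ => hterm j]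
    exact (ENNReal.ofReal_sum_of_nonneg fun j _ =>
      mul_nonneg (hc j) (integral_nonneg fun y => NNReal.coe_nonneg _)).symm
  have hABeq : (∑ j, ENNReal.ofReal (u j x) • μ j)
      = ∑ j, ENNReal.ofReal (∫ f : HomS1, u j (f x) ∂ν) • μ j := by
    haveI hfinA : IsFiniteMeasure (∑ j, ENNReal.ofReal (u j x) • μ j) := by
      constructor
      rw [Measure.finset_sum_apply]
      refine ENNReal.sum_lt_top.mpr fun j _ => ?_
      haveI := hprob j
      rw [Measure.smul_apply, smul_eq_mul]
      exact ENNReal.mul_lt_top ENNReal.ofReal_lt_top (measure_lt_top _ _)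
    apply ext_of_forall_lintegral_eq_of_IsFiniteMeasure
    intro f
    rw [hkey _ hunn f, hkey _ hbnn f, hident]
  have hTs : ∀ j : Fin d, ∃ T : Set S1, MeasurableSet T ∧ μ i T = 0 ∧
      (j ≠ i → μ j Tᶜ = 0) := by
    intro j
    by_cases h : j = i
    · exact ⟨∅, MeasurableSet.empty, measure_empty, fun h' => absurd h h'⟩
    · obtain ⟨T, hT1, hT2, hT3⟩ := ergodic_singular ν (hergo i) (hergo j)
        (fun he => h (hμ.1 he).symm)
      exact ⟨T, hT1, hT2, fun _ => hT3⟩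
  choose T hTm hT0 hTc using hTs
  have hSm : MeasurableSet (⋂ j, (T j)ᶜ) := MeasurableSet.iInter fun j => (hTm j).compl
  have hμiS : μ i (⋂ j, (T j)ᶜ) = 1 := by
    haveI := hprob i
    have hcompl : μ i (⋂ j, (T j)ᶜ)ᶜ = 0 := by
      rw [compl_iInter]
      simp only [compl_compl]
      exact measure_iUnion_null_iff.mpr fun j => hT0 j
    have h := measure_add_measure_compl (μ := μ i) hSm
    rw [hcompl, add_zero, measure_univ] at h
    exact h
  have hμjS : ∀ j, j ≠ i → μ j (⋂ k, (T k)ᶜ) = 0 := fun j hj =>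
    measure_mono_null (by
      intro z hz
      have := mem_iInter.mp hz j
      exact this) (hTc j hj)
  have heval : ∀ c : Fin d → ℝ,
      (∑ j, ENNReal.ofReal (c j) • μ j) (⋂ k, (T k)ᶜ) = ENNReal.ofReal (c i) := by
    intro c
    rw [Measure.finset_sum_apply]
    rw [Finset.sum_eq_single i]
    · rw [Measure.smul_apply, smul_eq_mul, hμiS, mul_one]
    · intro j _ hj
      rw [Measure.smul_apply, smul_eq_mul, hμjS j hj, mul_zero]
    · intro h
      exact absurd (Finset.mem_univ i) h
  have hfinal : ENNReal.ofReal (u i x) = ENNReal.ofReal (∫ f : HomS1, u i (f x) ∂ν) := by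
    rw [← heval (fun j => u j x), ← heval (fun j => ∫ f : HomS1, u j (f x) ∂ν), hABeq]
  exact (ENNReal.ofReal_eq_ofReal_iff (hunn i) (hbnn i)).mp hfinal

end AuxStatement8b

/-- **Lemma 4.1.** For an RDS of circle homeomorphisms without finite orbits with
weight maps `u_1, …, u_d`, the sets `{u_i = 0}` and `{u_i = 1}` are `F`-invariant. -/
theorem statement8 (ν : Measure HomS1) [IsProbabilityMeasure ν] (F : Set HomS1)
    (hsupp : measSupport ν = F) (hno : NoFiniteOrbit F)
    (d : ℕ) (μ : Fin d → Measure S1) (hμ : IsErgodicEnumeration ν μ)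
    (u : Fin d → S1 → ℝ) (hu : IsWeightSystem ν μ u) :
    ∀ i : Fin d,
      InvariantUnder F {x | u i x = 0} ∧ InvariantUnder F {x | u i x = 1} := by
  intro i
  have harm := fun (j : Fin d) (x : S1) => harmonicWeight ν μ hμ u hu j x
  have hcont := hu.1
  have hIcc := hu.2.1
  have huint : ∀ (j : Fin d) (x : S1), Integrable (fun f : HomS1 => u j (f x)) ν := fun j x =>
    int_bdd ν (M := 1)
      (fun f => abs_le.mpr ⟨by linarith [(hIcc j (f x)).1], (hIcc j (f x)).2⟩)
      (((hcont j).comp (cont_evalx x)).aestronglyMeasurable)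
  have key : ∀ v : S1 → ℝ, Continuous v → (∀ z, 0 ≤ v z) →
      (∀ x, v x = ∫ f : HomS1, v (f x) ∂ν) →
      (∀ x, Integrable (fun f : HomS1 => v (f x)) ν) →
      ∀ f₀ ∈ F, ∀ x : S1, v x = 0 → v (f₀ x) = 0 := by
    intro v hv hvnn hvh hvi f₀ hf₀ x hx
    by_contra hne
    have hpos : 0 < v (f₀ x) := lt_of_le_of_ne (hvnn _) (Ne.symm hne)
    have h0 : ∫ f : HomS1, v (f x) ∂ν = 0 := by rw [← hvh x]; exact hx
    have hae : (fun f : HomS1 => v (f x)) =ᵐ[ν] 0 :=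
      (integral_eq_zero_iff_of_nonneg (fun f => hvnn _) (hvi x)).mp h0
    have hU : IsOpen {f : HomS1 | 0 < v (f x)} :=
      isOpen_lt continuous_const (hv.comp (cont_evalx x))
    have hν0 : ν {f : HomS1 | 0 < v (f x)} = 0 := by
      have h1 : ν {f : HomS1 | ¬ v (f x) = 0} = 0 := by
        have h2 : ∀ᵐ f : HomS1 ∂ν, v (f x) = 0 := by
          filter_upwards [hae] with f hf using hf
        simpa [ae_iff] using h2
      exact measure_mono_null (fun f hf => ne_of_gt hf) h1
    have hmem : f₀ ∈ measSupport ν := by rw [hsupp]; exact hf₀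
    have hgt := hmem _ hU hpos
    rw [hν0] at hgt
    exact lt_irrefl 0 hgt
  constructor
  · intro f hf y hy
    obtain ⟨x, hx, rfl⟩ := hy
    exact key (u i) (hcont i) (fun z => (hIcc i z).1) (harm i) (huint i) f hf x hx
  · intro f hf y hy
    obtain ⟨x, hx, rfl⟩ := hy
    have hres := key (fun z => 1 - u i z) (continuous_const.sub (hcont i))
      (fun z => by show (0:ℝ) ≤ 1 - u i z; linarith [(hIcc i z).2])
      (fun x' => by
        show 1 - u i x' = ∫ f : HomS1, 1 - u i (f x') ∂ν
        rw [integral_sub (integrable_const 1) (huint i x'), integral_const, probReal_univ,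
          one_smul, ← harm i x'])
      (fun x' => (integrable_const 1).sub (huint i x'))
      f hf x (by show 1 - u i x = 0; rw [show u i x = 1 from hx]; ring)
    have : (1 : ℝ) - u i (f x) = 0 := hres
    show u i (f x) = 1
    linarith


end
end
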